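/- For every n ≥ 3 that is divisible by 3, there exist: a fixed common preference order shared by all n women; a probability distribution over the men's preference profiles under which each man's preference order over the women is drawn independently and uniformly at random from all n! linear orders; and an adversary (a response rule which, as a function of the realized preference profile and the history, reveals a valid blocking pair of the proposed matching whenever that matching is unstable) such that for every deterministic learning strategy for one-to-one matching markets of size n in the coarse query model, the expected number of matchings proposed before a stable matching is proposed is at least n²/9. -/

import Mathlib

/-- A preference profile in a one-to-one matching market of size `n`: for each woman
`w`, a rank permutation `P.w w` over the men (lower rank = more preferred), and for
each man `m`, a rank permutation `P.m m` over the women. -/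
structure Prefs (n : ℕ) where
  w : Fin n → Equiv.Perm (Fin n)
  m : Fin n → Equiv.Perm (Fin n)

/-- A matching is a bijection `M` from women to men.  The pair `(w, m)` blocks `M`
if `M w ≠ m`, woman `w` prefers `m` to her partner `M w`, and man `m` prefers `w`
to his partner `M.symm m`. -/
def Blocks {n : ℕ} (P : Prefs n) (M : Equiv.Perm (Fin n)) (w m : Fin n) : Prop :=
  M w ≠ m ∧ P.w w m < P.w w (M w) ∧ P.m m w < P.m m (M.symm m)

/-- A matching is stable if no pair blocks it. -/
def IsStable {n : ℕ} (P : Prefs n) (M : Equiv.Perm (Fin n)) : Prop :=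
  ∀ w m : Fin n, ¬ Blocks P M w m

/-- A history: a list of (proposed matching, revealed blocking pair) entries. -/
abbrev Hist (n : ℕ) := List (Equiv.Perm (Fin n) × (Fin n × Fin n))

/-- A deterministic learning strategy maps every history to a next proposed matching. -/
abbrev Strategy (n : ℕ) := Hist n → Equiv.Perm (Fin n)

/-- An adversary maps a history and a proposed matching to a revealed pair. -/
abbrev Adversary (n : ℕ) := Hist n → Equiv.Perm (Fin n) → Fin n × Fin n

/-- An adversary is valid for profile `P` if, whenever the proposed matching is
unstable, it reveals a blocking pair of that matching. -/
def ValidAdv {n : ℕ} (P : Prefs n) (adv : Adversary n) : Prop :=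
  ∀ (h : Hist n) (M : Equiv.Perm (Fin n)), ¬ IsStable P M →
    Blocks P M (adv h M).1 (adv h M).2

/-- The history after `t` rounds of the run of strategy `S` against adversary `adv`. -/
def runHist {n : ℕ} (S : Strategy n) (adv : Adversary n) : ℕ → Hist n
  | 0 => []
  | t + 1 =>
    let h := runHist S adv t
    h ++ [(S h, adv h (S h))]

/-- The `t`-th matching (0-indexed) proposed in the run of `S` against `adv`. -/
def proposal {n : ℕ} (S : Strategy n) (adv : Adversary n) (t : ℕ) :
    Equiv.Perm (Fin n) :=
  S (runHist S adv t)

noncomputable section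
namespace Stmt8
open Classical

variable {n : ℕ}

/-- the best (lowest-rank) element of a nonempty finset under rank permutation `p`. -/
def bestW (p : Equiv.Perm (Fin n)) (s : Finset (Fin n)) (hs : s.Nonempty) : Fin n :=
  p.symm ((s.image p).min' (hs.image p))

lemma bestW_mem (p : Equiv.Perm (Fin n)) (s : Finset (Fin n)) (hs : s.Nonempty) :
    bestW p s hs ∈ s := by
  have h := Finset.min'_mem (s.image p) (hs.image p)
  rcases Finset.mem_image.1 h with ⟨x, hx, hpx⟩
  have : p.symm (p x) = x := p.symm_apply_apply x
  simpa [bestW, ← hpx, this] using hx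

lemma bestW_le (p : Equiv.Perm (Fin n)) (s : Finset (Fin n)) (hs : s.Nonempty)
    {c : Fin n} (hc : c ∈ s) : p (bestW p s hs) ≤ p c := by
  have : p (bestW p s hs) = (s.image p).min' (hs.image p) := p.apply_symm_apply _
  rw [this]
  exact Finset.min'_le _ _ (Finset.mem_image_of_mem p hc)

lemma bestW_lt (p : Equiv.Perm (Fin n)) (s : Finset (Fin n)) (hs : s.Nonempty)
    {c : Fin n} (hc : c ∈ s) (hne : c ≠ bestW p s hs) : p (bestW p s hs) < p c := by
  rcases lt_or_eq_of_le (bestW_le p s hs hc) with h | h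
  · exact h
  · exact absurd (p.injective h.symm) hne

variable [NeZero n]

/-- preferences of man `k` (ℕ-indexed). -/
def mpN (mp : Fin n → Equiv.Perm (Fin n)) (k : ℕ) : Equiv.Perm (Fin n) :=
  if h : k < n then mp ⟨k, h⟩ else 1

lemma mpN_fin (mp : Fin n → Equiv.Perm (Fin n)) (j : Fin n) : mpN mp j.val = mp j := by
  simp [mpN, j.isLt]

/-- remaining women after serial dictatorship among men `0..k-1`. -/
def rem (mp : Fin n → Equiv.Perm (Fin n)) : ℕ → Finset (Fin n)
  | 0 => Finset.univ
  | k + 1 =>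
      if h : (rem mp k).Nonempty then
        (rem mp k).erase (bestW (mpN mp k) (rem mp k) h)
      else ∅

/-- serial dictatorship: the woman matched to man `k`. -/
def sdF (mp : Fin n → Equiv.Perm (Fin n)) (k : ℕ) : Fin n :=
  if h : (rem mp k).Nonempty then bestW (mpN mp k) (rem mp k) h else default

lemma rem_succ (mp : Fin n → Equiv.Perm (Fin n)) (k : ℕ) :
    rem mp (k + 1) = (rem mp k).erase (sdF mp k) := by
  by_cases h : (rem mp k).Nonempty
  · simp [rem, h, sdF]
  · have : rem mp k = ∅ := Finset.not_nonempty_iff_eq_empty.1 h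
    simp [rem, h, this]

lemma rem_card (mp : Fin n → Equiv.Perm (Fin n)) : ∀ k, k ≤ n → (rem mp k).card = n - k := by
  intro k
  induction k with
  | zero => intro _; simp [rem]
  | succ k ih =>
      intro hk
      have hk' : k ≤ n := Nat.le_of_succ_le hk
      have hcard : (rem mp k).card = n - k := ih hk'
      have hne : (rem mp k).Nonempty := by
        rw [← Finset.card_pos, hcard]; omega
      rw [rem_succ]
      have hmem : sdF mp k ∈ rem mp k := by
        simp only [sdF, dif_pos hne]; exact bestW_mem _ _ _
      rw [Finset.card_erase_of_mem hmem, hcard]; omega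

lemma rem_nonempty (mp : Fin n → Equiv.Perm (Fin n)) {k : ℕ} (hk : k < n) :
    (rem mp k).Nonempty := by
  rw [← Finset.card_pos, rem_card mp k (le_of_lt hk)]; omega

lemma sdF_mem (mp : Fin n → Equiv.Perm (Fin n)) {k : ℕ} (hk : k < n) :
    sdF mp k ∈ rem mp k := by
  simp only [sdF, dif_pos (rem_nonempty mp hk)]; exact bestW_mem _ _ _

lemma sdF_lt (mp : Fin n → Equiv.Perm (Fin n)) {k : ℕ} (hk : k < n) {c : Fin n}
    (hc : c ∈ rem mp k) (hne : c ≠ sdF mp k) : mpN mp k (sdF mp k) < mpN mp k c := by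
  simp only [sdF, dif_pos (rem_nonempty mp hk)] at hne ⊢
  exact bestW_lt _ _ _ hc hne

lemma rem_subset (mp : Fin n → Equiv.Perm (Fin n)) {j k : ℕ} (h : j ≤ k) :
    rem mp k ⊆ rem mp j := by
  induction k with
  | zero => simp_all
  | succ k ih =>
      rcases Nat.lt_or_ge j (k+1) with h' | h'
      · have := ih (Nat.lt_succ_iff.1 h')
        rw [rem_succ]
        exact (Finset.erase_subset _ _).trans this
      · have : j = k + 1 := le_antisymm h h'
        subst this; rfl

lemma mem_rem_iff (mp : Fin n → Equiv.Perm (Fin n)) (k : ℕ) (v : Fin n) :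
    v ∈ rem mp k ↔ ∀ j < k, sdF mp j ≠ v := by
  induction k with
  | zero => simp [rem]
  | succ k ih =>
      rw [rem_succ, Finset.mem_erase]
      constructor
      · rintro ⟨h1, h2⟩ j hj
        rcases Nat.lt_succ_iff_lt_or_eq.1 hj with hj' | rfl
        · exact (ih.1 h2) j hj'
        · exact fun he => h1 he.symm
      · intro h
        refine ⟨fun he => (h k (Nat.lt_succ_self k)) he.symm, ih.2 fun j hj => h j (hj.trans (Nat.lt_succ_self k))⟩

lemma sdF_inj (mp : Fin n → Equiv.Perm (Fin n)) {j k : ℕ} (hjk : j < k) (hk : k < n) :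
    sdF mp j ≠ sdF mp k := by
  intro he
  have := (mem_rem_iff mp k (sdF mp k)).1 (sdF_mem mp hk) j hjk
  exact this he

lemma sdF_congr (mp mp' : Fin n → Equiv.Perm (Fin n)) (k : ℕ)
    (h1 : rem mp k = rem mp' k) (h2 : mpN mp k = mpN mp' k) : sdF mp k = sdF mp' k := by
  simp only [sdF, h1, h2]

/-- `rem` and `sdF` below `K` only depend on preferences of men below `K`. -/
lemma sdF_indep (mp mp' : Fin n → Equiv.Perm (Fin n)) (K : ℕ)
    (h : ∀ j : Fin n, j.val < K → mp j = mp' j) :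
    ∀ k ≤ K, rem mp k = rem mp' k ∧ (k < K → sdF mp k = sdF mp' k) := by
  have hmpN : ∀ k < K, mpN mp k = mpN mp' k := by
    intro k hk
    by_cases h0 : k < n
    · simp [mpN, h0, h ⟨k, h0⟩ hk]
    · simp [mpN, h0]
  intro k
  induction k with
  | zero =>
      intro _
      exact ⟨rfl, fun hk => sdF_congr mp mp' 0 rfl (hmpN 0 hk)⟩
  | succ k ih =>
      intro hk
      obtain ⟨hrem, hsd⟩ := ih (Nat.le_of_succ_le hk)
      have hsd' : sdF mp k = sdF mp' k := hsd (Nat.lt_of_succ_le hk)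
      refine ⟨by rw [rem_succ, rem_succ, hrem, hsd'], fun hlt => ?_⟩
      refine sdF_congr mp mp' (k+1) (by rw [rem_succ, rem_succ, hrem, hsd']) (hmpN _ hlt)

/-! ### Phase B : stable matchings are exactly serial dictatorship -/

def Pm (mp : Fin n → Equiv.Perm (Fin n)) : Prefs n := ⟨fun _ => 1, mp⟩

lemma blocks_iff (mp : Fin n → Equiv.Perm (Fin n)) (M : Equiv.Perm (Fin n)) (w m : Fin n) :
    Blocks (Pm mp) M w m ↔ M w ≠ m ∧ m < M w ∧ mp m w < mp m (M.symm m) := by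
  simp [Blocks, Pm]

lemma matches_sd_stable (mp : Fin n → Equiv.Perm (Fin n)) (M : Equiv.Perm (Fin n))
    (hM : ∀ j : Fin n, M.symm j = sdF mp j.val) : IsStable (Pm mp) M := by
  intro w m hb
  rw [blocks_iff] at hb
  obtain ⟨h1, h2, h3⟩ := hb
  set j := M w with hj
  have hw : w = sdF mp j.val := by
    rw [← hM j, hj, Equiv.symm_apply_apply]
  have hmj : m.val < j.val := h2
  have hwmem : w ∈ rem mp (m.val + 1) := by
    rw [hw, mem_rem_iff]
    intro i hi hne
    have hij : i < j.val := by omega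
    exact sdF_inj mp hij j.isLt hne
  have hwrem : w ∈ rem mp m.val := rem_subset mp (Nat.le_succ _) hwmem
  have hwne : w ≠ sdF mp m.val := by
    have := (mem_rem_iff mp (m.val+1) w).1 hwmem m.val (Nat.lt_succ_self _)
    exact fun he => this he.symm
  have hlt := sdF_lt mp m.isLt hwrem (by exact hwne)
  rw [mpN_fin] at hlt
  rw [hM m] at h3
  exact absurd (h3.trans hlt) (lt_irrefl _)

lemma stable_matches_sd (mp : Fin n → Equiv.Perm (Fin n)) (M : Equiv.Perm (Fin n))
    (hS : IsStable (Pm mp) M) : ∀ j : Fin n, M.symm j = sdF mp j.val := by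
  by_contra hc
  push_neg at hc
  set B : Finset (Fin n) := Finset.univ.filter (fun j => M.symm j ≠ sdF mp j.val) with hB
  have hBne : B.Nonempty := by
    obtain ⟨j, hj⟩ := hc
    exact ⟨j, by simp [hB, hj]⟩
  set j0 := B.min' hBne with hj0
  have hj0mem : M.symm j0 ≠ sdF mp j0.val := by
    have := B.min'_mem hBne
    simpa [hB] using this
  have hmin : ∀ j : Fin n, j < j0 → M.symm j = sdF mp j.val := by
    intro j hj
    by_contra hne
    have : j ∈ B := by simp [hB, hne]
    exact absurd (B.min'_le j this) (not_le.2 hj)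
  set w := sdF mp j0.val with hw
  have hwmem : w ∈ rem mp j0.val := sdF_mem mp j0.isLt
  -- M w ≠ j0
  have h1 : M w ≠ j0 := by
    intro he
    apply hj0mem
    rw [← he, Equiv.symm_apply_apply]
  -- j0 < M w
  have h2 : j0 < M w := by
    rcases lt_trichotomy (M w) j0 with h | h | h
    · exfalso
      have := hmin (M w) h
      rw [Equiv.symm_apply_apply] at this
      have hlt : (M w).val < j0.val := h
      exact sdF_inj mp hlt j0.isLt this.symm
    · exact absurd h h1
    · exact h
  -- man side
  have hpmem : M.symm j0 ∈ rem mp j0.val := by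
    rw [mem_rem_iff]
    intro i hi hne
    have : M.symm ⟨i, lt_trans hi j0.isLt⟩ = sdF mp i := by
      have : (⟨i, lt_trans hi j0.isLt⟩ : Fin n) < j0 := hi
      simpa using hmin _ this
    rw [← this] at hne
    have := M.symm.injective hne
    have hii : (⟨i, lt_trans hi j0.isLt⟩ : Fin n) = j0 := this
    have : i = j0.val := congrArg Fin.val hii
    omega
  have h3 : mp j0 w < mp j0 (M.symm j0) := by
    have := sdF_lt mp j0.isLt hpmem (by exact fun he => hj0mem he)
    rw [mpN_fin] at this
    exact this
  exact hS w j0 ((blocks_iff mp M w j0).2 ⟨h1, h2, h3⟩)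

lemma stable_iff_sd (mp : Fin n → Equiv.Perm (Fin n)) (M : Equiv.Perm (Fin n)) :
    IsStable (Pm mp) M ↔ ∀ j : Fin n, M.symm j = sdF mp j.val :=
  ⟨stable_matches_sd mp M, matches_sd_stable mp M⟩

/-! ### relative position within a set -/

def rp (p : Equiv.Perm (Fin n)) (V : Finset (Fin n)) (v : Fin n) : ℕ :=
  (V.filter (fun c => p c < p v)).card

lemma rp_lt_card (p : Equiv.Perm (Fin n)) (V : Finset (Fin n)) {v : Fin n} (hv : v ∈ V) :
    rp p V v < V.card := by
  have : (V.filter (fun c => p c < p v)) ⊂ V := by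
    refine Finset.ssubset_iff_of_subset (Finset.filter_subset _ _) |>.2 ⟨v, hv, by simp⟩
  exact Finset.card_lt_card this

lemma rp_strictMono (p : Equiv.Perm (Fin n)) (V : Finset (Fin n)) {a b : Fin n}
    (haV : a ∈ V) (hab : p a < p b) : rp p V a < rp p V b := by
  apply Finset.card_lt_card
  constructor
  · intro c hc
    simp only [Finset.mem_filter] at hc ⊢
    exact ⟨hc.1, lt_trans hc.2 hab⟩
  · intro hsub
    have h1 : a ∈ V.filter (fun c => p c < p b) := by simp [haV, hab]
    have := hsub h1
    simp only [Finset.mem_filter] at this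
    exact lt_irrefl _ this.2

lemma rp_inj_on (p : Equiv.Perm (Fin n)) (V : Finset (Fin n)) {a b : Fin n}
    (haV : a ∈ V) (hbV : b ∈ V) (h : rp p V a = rp p V b) : a = b := by
  rcases lt_trichotomy (p a) (p b) with hlt | heq | hlt
  · exact absurd h (ne_of_lt (rp_strictMono p V haV hlt))
  · exact p.injective heq
  · exact absurd h.symm (ne_of_lt (rp_strictMono p V hbV hlt))

lemma rp_lt_iff (p : Equiv.Perm (Fin n)) (V : Finset (Fin n)) {a b : Fin n}
    (haV : a ∈ V) (hbV : b ∈ V) : rp p V a < rp p V b ↔ p a < p b := by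
  constructor
  · intro h
    rcases lt_trichotomy (p a) (p b) with hlt | heq | hlt
    · exact hlt
    · exact absurd (p.injective heq) (by rintro rfl; exact lt_irrefl _ h)
    · exact absurd (rp_strictMono p V hbV hlt) (by omega)
  · exact rp_strictMono p V haV

lemma rp_surj (p : Equiv.Perm (Fin n)) (V : Finset (Fin n)) {j : ℕ} (hj : j < V.card) :
    ∃ v ∈ V, rp p V v = j := by
  classical
  have hmaps : ∀ v ∈ V, rp p V v ∈ Finset.range V.card := by
    intro v hv; simpa using rp_lt_card p V hv
  have hinj : ∀ a ∈ V, ∀ b ∈ V, rp p V a = rp p V b → a = b :=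
    fun a ha b hb h => rp_inj_on p V ha hb h
  have hcard : (Finset.range V.card).card ≤ V.card := by simp
  have := Finset.surj_on_of_inj_on_of_card_le (s := V) (t := Finset.range V.card)
    (fun v _ => rp p V v) (fun a ha => hmaps a ha) (fun a b ha hb h => hinj a ha b hb h) hcard
  obtain ⟨v, hv, hveq⟩ := this j (by simpa using hj)
  exact ⟨v, hv, hveq.symm⟩

/-! ### Phase B2 : the adversary -/

def worstW (p : Equiv.Perm (Fin n)) (s : Finset (Fin n)) (hs : s.Nonempty) : Fin n :=
  p.symm ((s.image p).max' (hs.image p))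

lemma worstW_mem (p : Equiv.Perm (Fin n)) (s : Finset (Fin n)) (hs : s.Nonempty) :
    worstW p s hs ∈ s := by
  have h := Finset.max'_mem (s.image p) (hs.image p)
  rcases Finset.mem_image.1 h with ⟨x, hx, hpx⟩
  have : p.symm (p x) = x := p.symm_apply_apply x
  simpa [worstW, ← hpx, this] using hx

lemma worstW_ge (p : Equiv.Perm (Fin n)) (s : Finset (Fin n)) (hs : s.Nonempty)
    {c : Fin n} (hc : c ∈ s) : p c ≤ p (worstW p s hs) := by
  have : p (worstW p s hs) = (s.image p).max' (hs.image p) := p.apply_symm_apply _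
  rw [this]
  exact Finset.le_max' _ _ (Finset.mem_image_of_mem p hc)

def badF (mp : Fin n → Equiv.Perm (Fin n)) (M : Equiv.Perm (Fin n)) : Finset (Fin n) :=
  Finset.univ.filter (fun j => M.symm j ≠ sdF mp j.val)

def aboveSet (mp : Fin n → Equiv.Perm (Fin n)) (j w : Fin n) : Finset (Fin n) :=
  (rem mp j.val).filter (fun c => mp j c < mp j w)

def wNext (mp : Fin n → Equiv.Perm (Fin n)) (j w : Fin n) : Fin n :=
  if h : (aboveSet mp j w).Nonempty then worstW (mp j) _ h else default

/-- The adversary: find the least mismatched man `j`, and reveal the pair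
`(w', j)` where `w'` is the next woman above `j`'s current partner in `j`'s
preferences among the women not taken by serial dictatorship before `j`. -/
def advF (mp : Fin n → Equiv.Perm (Fin n)) : Adversary n := fun _ M =>
  if hB : (badF mp M).Nonempty then
    ((wNext mp ((badF mp M).min' hB) (M.symm ((badF mp M).min' hB))), (badF mp M).min' hB)
  else (default, default)

lemma badF_nonempty_of_unstable (mp : Fin n → Equiv.Perm (Fin n)) (M : Equiv.Perm (Fin n))
    (h : ¬ IsStable (Pm mp) M) : (badF mp M).Nonempty := by
  by_contra hc
  rw [Finset.not_nonempty_iff_eq_empty] at hc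
  apply h
  apply matches_sd_stable
  intro j
  by_contra hj
  have : j ∈ badF mp M := by simp [badF, hj]
  simp [hc] at this

lemma partner_mem_rem (mp : Fin n → Equiv.Perm (Fin n)) (M : Equiv.Perm (Fin n)) (j0 : Fin n)
    (hmin : ∀ j : Fin n, j < j0 → M.symm j = sdF mp j.val) : M.symm j0 ∈ rem mp j0.val := by
  rw [mem_rem_iff]
  intro i hi hne
  have hii : (⟨i, lt_trans hi j0.isLt⟩ : Fin n) < j0 := hi
  have : M.symm ⟨i, lt_trans hi j0.isLt⟩ = sdF mp i := by simpa using hmin _ hii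
  rw [← this] at hne
  have := M.symm.injective hne
  have : i = j0.val := congrArg Fin.val this
  omega

section advfacts
variable (mp : Fin n → Equiv.Perm (Fin n)) (M : Equiv.Perm (Fin n)) (j0 : Fin n)
  (hj0 : M.symm j0 ≠ sdF mp j0.val)
  (hmin : ∀ j : Fin n, j < j0 → M.symm j = sdF mp j.val)

include hj0 hmin

lemma aboveSet_nonempty : (aboveSet mp j0 (M.symm j0)).Nonempty := by
  refine ⟨sdF mp j0.val, ?_⟩
  have h1 := partner_mem_rem mp M j0 hmin
  have := sdF_lt mp j0.isLt h1 hj0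
  rw [mpN_fin] at this
  simp [aboveSet, sdF_mem mp j0.isLt, this]

lemma wNext_mem : wNext mp j0 (M.symm j0) ∈ aboveSet mp j0 (M.symm j0) := by
  rw [wNext, dif_pos (aboveSet_nonempty mp M j0 hj0 hmin)]
  exact worstW_mem _ _ _

/-- the revealed pair blocks `M`. -/
lemma wNext_blocks : Blocks (Pm mp) M (wNext mp j0 (M.symm j0)) j0 := by
  have hmem := wNext_mem mp M j0 hj0 hmin
  rw [aboveSet, Finset.mem_filter] at hmem
  obtain ⟨hrem, hlt⟩ := hmem
  set w' := wNext mp j0 (M.symm j0) with hw'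
  have hne : w' ≠ M.symm j0 := by
    intro he; rw [he] at hlt; exact lt_irrefl _ hlt
  have h1 : M w' ≠ j0 := by
    intro he
    apply hne
    rw [← he, Equiv.symm_apply_apply]
  have h2 : j0 < M w' := by
    rcases lt_trichotomy (M w') j0 with h | h | h
    · exfalso
      have hmw := hmin (M w') h
      rw [Equiv.symm_apply_apply] at hmw
      have := (mem_rem_iff mp j0.val w').1 hrem (M w').val h
      exact this hmw.symm
    · exact absurd h h1
    · exact h
  exact (blocks_iff mp M w' j0).2 ⟨h1, h2, hlt⟩

/-- the successor fact : the revealed woman is exactly one position above the partner. -/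
lemma wNext_rp : rp (mp j0) (rem mp j0.val) (wNext mp j0 (M.symm j0)) + 1
    = rp (mp j0) (rem mp j0.val) (M.symm j0) := by
  have hAne := aboveSet_nonempty mp M j0 hj0 hmin
  set w := M.symm j0 with hwdef
  set w' := wNext mp j0 w with hw'
  have hw'max : ∀ c ∈ aboveSet mp j0 w, mp j0 c ≤ mp j0 w' := by
    intro c hc
    rw [hw', wNext, dif_pos hAne]
    exact worstW_ge _ _ _ hc
  have hmem : w' ∈ aboveSet mp j0 w := wNext_mem mp M j0 hj0 hmin
  rw [aboveSet, Finset.mem_filter] at hmem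
  have hset : (rem mp j0.val).filter (fun c => mp j0 c < mp j0 w)
      = insert w' ((rem mp j0.val).filter (fun c => mp j0 c < mp j0 w')) := by
    ext c
    simp only [Finset.mem_filter, Finset.mem_insert]
    constructor
    · rintro ⟨hcr, hcw⟩
      have hle : mp j0 c ≤ mp j0 w' := hw'max c (by simp [aboveSet, hcr, hcw])
      rcases lt_or_eq_of_le hle with h | h
      · exact Or.inr ⟨hcr, h⟩
      · exact Or.inl ((mp j0).injective h)
    · rintro (rfl | ⟨hcr, hc⟩)
      · exact ⟨hmem.1, hmem.2⟩
      · exact ⟨hcr, lt_trans hc hmem.2⟩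
  have hnotmem : w' ∉ (rem mp j0.val).filter (fun c => mp j0 c < mp j0 w') := by
    simp
  rw [rp, rp, hset, Finset.card_insert_of_notMem hnotmem]

end advfacts

lemma advF_valid (mp : Fin n → Equiv.Perm (Fin n)) : ValidAdv (Pm mp) (advF mp) := by
  intro h M hM
  have hB := badF_nonempty_of_unstable mp M hM
  set j0 := (badF mp M).min' hB with hj0def
  have hj0 : M.symm j0 ≠ sdF mp j0.val := by
    have := (badF mp M).min'_mem hB
    rw [← hj0def] at this
    simpa [badF] using this
  have hmin : ∀ j : Fin n, j < j0 → M.symm j = sdF mp j.val := by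
    intro j hj
    by_contra hne
    have : j ∈ badF mp M := by simp [badF, hne]
    exact absurd ((badF mp M).min'_le j this) (not_le.2 hj)
  have : advF mp h M = (wNext mp j0 (M.symm j0), j0) := by
    rw [advF, dif_pos hB]
  rw [this]
  exact wNext_blocks mp M j0 hj0 hmin

/-- rp of the best element is 0, and conversely. -/
lemma rp_sdF (mp : Fin n → Equiv.Perm (Fin n)) {k : ℕ} (hk : k < n) :
    rp (mpN mp k) (rem mp k) (sdF mp k) = 0 := by
  rw [rp, Finset.card_eq_zero, Finset.filter_eq_empty_iff]
  intro c hc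
  by_cases hne : c = sdF mp k
  · subst hne; simp
  · have := sdF_lt mp hk hc hne
    omega

lemma rp_zero_iff (mp : Fin n → Equiv.Perm (Fin n)) {k : ℕ} (hk : k < n) {v : Fin n}
    (hv : v ∈ rem mp k) : rp (mpN mp k) (rem mp k) v = 0 ↔ v = sdF mp k := by
  constructor
  · intro h
    exact rp_inj_on (mpN mp k) (rem mp k) hv (sdF_mem mp hk) (by rw [h, rp_sdF mp hk])
  · rintro rfl; exact rp_sdF mp hk

/-! ### Phase C : the rotation/hazard lemma -/

section rotation

lemma mod_drop (m c a : ℕ) : (a + c) % m = (a + c % m) % m := by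
  conv_lhs => rw [Nat.add_mod]
  conv_rhs => rw [Nat.add_mod]
  rw [Nat.mod_mod_of_dvd _ (dvd_refl m)]

lemma mod_shift {m : ℕ} (hm : 0 < m) (c : ℕ) {a : ℕ} (ha : a < m) :
    ((a + c) % m + (m - c % m)) % m = a := by
  have hr : c % m < m := Nat.mod_lt _ hm
  rw [mod_drop m c a, Nat.mod_add_mod]
  have : a + c % m + (m - c % m) = a + m := by omega
  rw [this, Nat.add_mod_right, Nat.mod_eq_of_lt ha]

lemma mod_unshift {m : ℕ} (hm : 0 < m) (c : ℕ) {i : ℕ} (hi : i < m) :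
    ((i + (m - c % m)) % m + c) % m = i := by
  have hr : c % m < m := Nat.mod_lt _ hm
  rw [Nat.mod_add_mod, mod_drop m c]
  have : i + (m - c % m) + c % m = i + m := by omega
  rw [this, Nat.add_mod_right, Nat.mod_eq_of_lt hi]

lemma mod_add_cancel {m : ℕ} (hm : 0 < m) (c : ℕ) {j j' : ℕ} (hj : j < m) (hj' : j' < m)
    (h : (j + c) % m = (j' + c) % m) : j = j' := by
  have h1 := mod_shift hm c hj
  have h2 := mod_shift hm c hj'
  rw [← h1, ← h2, h]

variable (V : Finset (Fin n))

/-- the element of `V` at relative position `j` (junk if out of range). -/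
def invR (q : Equiv.Perm (Fin n)) (j : ℕ) : Fin n :=
  if h : ∃ v, v ∈ V ∧ rp q V v = j then h.choose else default

lemma invR_spec (q : Equiv.Perm (Fin n)) {j : ℕ} (hj : j < V.card) :
    invR V q j ∈ V ∧ rp q V (invR V q j) = j := by
  obtain ⟨v, hv, hrv⟩ := rp_surj q V hj
  have hex : ∃ v, v ∈ V ∧ rp q V v = j := ⟨v, hv, hrv⟩
  rw [invR, dif_pos hex]
  exact hex.choose_spec

lemma invR_of_rp (q : Equiv.Perm (Fin n)) {v : Fin n} (hv : v ∈ V) :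
    invR V q (rp q V v) = v := by
  have hj : rp q V v < V.card := rp_lt_card q V hv
  obtain ⟨hmem, hrp⟩ := invR_spec V q hj
  exact rp_inj_on q V hmem hv hrp

lemma invR_congr (q q' : Equiv.Perm (Fin n)) (h : ∀ v ∈ V, rp q V v = rp q' V v) (j : ℕ) :
    invR V q j = invR V q' j := by
  by_cases hj : j < V.card
  · obtain ⟨hmem, hrp⟩ := invR_spec V q hj
    obtain ⟨hmem', hrp'⟩ := invR_spec V q' hj
    exact rp_inj_on q' V hmem hmem' (by rw [← h _ hmem, hrp, hrp'])
  · have he : ¬ ∃ v, v ∈ V ∧ rp q V v = j := by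
      rintro ⟨v, hv, hrv⟩; exact hj (hrv ▸ rp_lt_card q V hv)
    have he' : ¬ ∃ v, v ∈ V ∧ rp q' V v = j := by
      rintro ⟨v, hv, hrv⟩; exact hj (hrv ▸ rp_lt_card q' V hv)
    rw [invR, dif_neg he, invR, dif_neg he']

/-- rotate the ranks of the members of `V` cyclically by `c` relative positions. -/
def rotF (q : Equiv.Perm (Fin n)) (c : ℕ) (v : Fin n) : Fin n :=
  if v ∈ V then invR V q ((rp q V v + c) % V.card) else v

lemma rotF_mem (q : Equiv.Perm (Fin n)) (c : ℕ) {v : Fin n} (hv : v ∈ V) :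
    rotF V q c v ∈ V ∧ rp q V (rotF V q c v) = (rp q V v + c) % V.card := by
  have hm : 0 < V.card := Finset.card_pos.2 ⟨v, hv⟩
  have hj : (rp q V v + c) % V.card < V.card := Nat.mod_lt _ hm
  rw [rotF, if_pos hv]
  exact invR_spec V q hj

lemma rotF_injective (q : Equiv.Perm (Fin n)) (c : ℕ) : Function.Injective (rotF V q c) := by
  intro a b hab
  by_cases ha : a ∈ V <;> by_cases hb : b ∈ V
  · have hm : 0 < V.card := Finset.card_pos.2 ⟨a, ha⟩
    have h1 := rotF_mem V q c ha
    have h2 := rotF_mem V q c hb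
    have : (rp q V a + c) % V.card = (rp q V b + c) % V.card := by
      rw [← h1.2, ← h2.2, hab]
    have := mod_add_cancel hm c (rp_lt_card q V ha) (rp_lt_card q V hb) this
    exact rp_inj_on q V ha hb this
  · exfalso; rw [rotF, if_pos ha, rotF, if_neg hb] at hab
    exact hb (hab ▸ (invR_spec V q (Nat.mod_lt _ (Finset.card_pos.2 ⟨a, ha⟩))).1)
  · exfalso; rw [rotF, if_neg ha, rotF, if_pos hb] at hab
    exact ha (hab.symm ▸ (invR_spec V q (Nat.mod_lt _ (Finset.card_pos.2 ⟨b, hb⟩))).1)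
  · rwa [rotF, if_neg ha, rotF, if_neg hb] at hab

/-- the rotated permutation. -/
def Psi (c : ℕ) (q : Equiv.Perm (Fin n)) : Equiv.Perm (Fin n) :=
  (Equiv.ofBijective (rotF V q c)
    ((Finite.injective_iff_bijective).1 (rotF_injective V q c))).trans q

lemma Psi_apply (c : ℕ) (q : Equiv.Perm (Fin n)) (v : Fin n) :
    Psi V c q v = q (rotF V q c v) := rfl

lemma Psi_apply_not_mem (c : ℕ) (q : Equiv.Perm (Fin n)) (v : Fin n) (hv : v ∉ V) :
    Psi V c q v = q v := by rw [Psi_apply, rotF, if_neg hv]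

lemma rp_Psi (c : ℕ) (q : Equiv.Perm (Fin n)) {v : Fin n} (hv : v ∈ V) :
    rp (Psi V c q) V v = (rp q V v + c) % V.card := by
  have hm : 0 < V.card := Finset.card_pos.2 ⟨v, hv⟩
  set t := (rp q V v + c) % V.card with ht
  have htlt : t < V.card := Nat.mod_lt _ hm
  have key : (V.filter (fun c' => Psi V c q c' < Psi V c q v)).card = (Finset.range t).card := by
    refine Finset.card_bij' (fun c' _ => (rp q V c' + c) % V.card)
      (fun i _ => invR V q ((i + (V.card - c % V.card)) % V.card)) ?_ ?_ ?_ ?_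
    · intro c' hc'
      rw [Finset.mem_filter] at hc'
      obtain ⟨hc'V, hlt⟩ := hc'
      rw [Finset.mem_range]
      rw [Psi_apply, Psi_apply] at hlt
      have h1 := rotF_mem V q c hc'V
      have h2 := rotF_mem V q c hv
      have := (rp_lt_iff q V h1.1 h2.1).2 hlt
      rwa [h1.2, h2.2] at this
    · intro i hi
      rw [Finset.mem_range] at hi
      have hjj : (i + (V.card - c % V.card)) % V.card < V.card := Nat.mod_lt _ hm
      obtain ⟨hmem, hrp⟩ := invR_spec V q hjj
      rw [Finset.mem_filter]
      refine ⟨hmem, ?_⟩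
      rw [Psi_apply, Psi_apply]
      have h1 := rotF_mem V q c hmem
      have h2 := rotF_mem V q c hv
      rw [← rp_lt_iff q V h1.1 h2.1, h1.2, h2.2, hrp, mod_unshift hm c (lt_trans hi htlt)]
      exact hi
    · intro c' hc'
      rw [Finset.mem_filter] at hc'
      simp only [mod_shift hm c (rp_lt_card q V hc'.1)]
      exact invR_of_rp V q hc'.1
    · intro i hi
      rw [Finset.mem_range] at hi
      have hjj : (i + (V.card - c % V.card)) % V.card < V.card := Nat.mod_lt _ hm
      obtain ⟨hmem, hrp⟩ := invR_spec V q hjj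
      simp only [hrp]
      rw [mod_unshift hm c (lt_trans hi htlt)]
  rw [rp, key, Finset.card_range]

lemma Psi_injective (c : ℕ) : Function.Injective (fun q => Psi V c q) := by
  intro q1 q2 hh
  have h : Psi V c q1 = Psi V c q2 := hh
  by_cases hV : V.Nonempty
  · have hm : 0 < V.card := Finset.card_pos.2 hV
    have hrp : ∀ v ∈ V, rp q1 V v = rp q2 V v := by
      intro v hv
      have h1 : rp (Psi V c q1) V v = (rp q1 V v + c) % V.card := rp_Psi V c q1 hv
      have h2 : rp (Psi V c q2) V v = (rp q2 V v + c) % V.card := rp_Psi V c q2 hv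
      rw [h] at h1
      exact mod_add_cancel hm c (rp_lt_card q1 V hv) (rp_lt_card q2 V hv) (h1.symm.trans h2)
    apply Equiv.ext
    intro w
    by_cases hw : w ∈ V
    · -- q1 and q2 agree on V
      have key : ∀ u ∈ V, q1 u = q2 u := by
        intro u hu
        -- u = invR q1 j for j := rp q1 u ; pick v with (rp v + c) % m = j
        set j := rp q1 V u with hj
        have hjlt : j < V.card := rp_lt_card q1 V hu
        set jj := (j + (V.card - c % V.card)) % V.card with hjj
        have hjjlt : jj < V.card := Nat.mod_lt _ hm
        obtain ⟨hvm, hvrp⟩ := invR_spec V q1 hjjlt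
        set v := invR V q1 jj with hvdef
        have hPsi1 : Psi V c q1 v = q1 (invR V q1 ((rp q1 V v + c) % V.card)) := by
          rw [Psi_apply, rotF, if_pos hvm]
        have hPsi2 : Psi V c q2 v = q2 (invR V q2 ((rp q2 V v + c) % V.card)) := by
          rw [Psi_apply, rotF, if_pos hvm]
        have hrpv : rp q1 V v = jj := hvrp
        have heq1 : (rp q1 V v + c) % V.card = j := by rw [hrpv, hjj, mod_unshift hm c hjlt]
        have heq2 : (rp q2 V v + c) % V.card = j := by rw [← hrp v hvm, hrpv, hjj, mod_unshift hm c hjlt]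
        have hinvc : invR V q2 j = invR V q1 j := invR_congr V q2 q1 (fun v hv => (hrp v hv).symm) j
        have hu1 : invR V q1 j = u := invR_of_rp V q1 hu
        have : Psi V c q1 v = Psi V c q2 v := DFunLike.congr_fun h v
        rw [hPsi1, hPsi2] at this
        rw [heq1, heq2, hinvc, hu1] at this
        exact this
      exact key w hw
    · have h1 := Psi_apply_not_mem V c q1 (hv := hw)
      have h2 := Psi_apply_not_mem V c q2 (hv := hw)
      rw [← h1, ← h2, h]
  · -- V empty : Psi = q
    rw [Finset.not_nonempty_iff_eq_empty] at hV
    subst hV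
    apply Equiv.ext
    intro w
    have h1 := Psi_apply_not_mem (∅ : Finset (Fin n)) c q1 w (by simp)
    have h2 := Psi_apply_not_mem (∅ : Finset (Fin n)) c q2 w (by simp)
    rw [← h1, ← h2, h]

end rotation

/-! ### Phase C2 : the hazard counting lemma -/

section hazard
open scoped Classical

variable (V : Finset (Fin n)) (F : List (Fin n × Fin n))

/-- `q` satisfies all the successor facts in `F`. -/
def SatP (q : Equiv.Perm (Fin n)) : Prop :=
  ∀ ab ∈ F, ab.1 ∈ V ∧ ab.2 ∈ V ∧ rp q V ab.2 + 1 = rp q V ab.1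

/-- cyclic version of the facts. -/
def SatC (q : Equiv.Perm (Fin n)) : Prop :=
  ∀ ab ∈ F, ab.1 ∈ V ∧ ab.2 ∈ V ∧ (rp q V ab.2 + 1) % V.card = rp q V ab.1

lemma SatP_SatC {q : Equiv.Perm (Fin n)} (h : SatP V F q) : SatC V F q := by
  intro ab hab
  obtain ⟨h1, h2, h3⟩ := h ab hab
  refine ⟨h1, h2, ?_⟩
  rw [h3]
  exact Nat.mod_eq_of_lt (rp_lt_card q V h1)

lemma SatC_Psi (c : ℕ) {q : Equiv.Perm (Fin n)} (h : SatC V F q) : SatC V F (Psi V c q) := by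
  intro ab hab
  obtain ⟨h1, h2, h3⟩ := h ab hab
  refine ⟨h1, h2, ?_⟩
  rw [rp_Psi V c q h1, rp_Psi V c q h2]
  rw [Nat.mod_add_mod, Nat.add_right_comm, ← Nat.mod_add_mod, h3]

lemma SatP_Psi_of_good (c : ℕ) {q : Equiv.Perm (Fin n)} (h : SatC V F q)
    (hgood : ∀ ab ∈ F, (rp q V ab.2 + c) % V.card ≠ V.card - 1) : SatP V F (Psi V c q) := by
  intro ab hab
  obtain ⟨h1, h2, h3⟩ := h ab hab
  refine ⟨h1, h2, ?_⟩
  have hm : 0 < V.card := Finset.card_pos.2 ⟨ab.1, h1⟩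
  have hcyc : ((rp (Psi V c q) V ab.2) + 1) % V.card = rp (Psi V c q) V ab.1 :=
    (SatC_Psi V F c h) ab hab |>.2.2
  have hb : rp (Psi V c q) V ab.2 = (rp q V ab.2 + c) % V.card := rp_Psi V c q h2
  have hblt : rp (Psi V c q) V ab.2 < V.card := rp_lt_card _ V h2
  have hne : rp (Psi V c q) V ab.2 ≠ V.card - 1 := by rw [hb]; exact hgood ab hab
  have : rp (Psi V c q) V ab.2 + 1 < V.card := by omega
  rw [← hcyc, Nat.mod_eq_of_lt this]

lemma good_card {q : Equiv.Perm (Fin n)} (hm : 0 < V.card) (h : SatC V F q) :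
    V.card - F.length ≤ ((Finset.range V.card).filter (fun c => SatP V F (Psi V c q))).card := by
  set bad := (Finset.range V.card).filter
    (fun c => ∃ ab ∈ F, (rp q V ab.2 + c) % V.card = V.card - 1) with hbad
  have hsub : (Finset.range V.card) \ bad ⊆
      (Finset.range V.card).filter (fun c => SatP V F (Psi V c q)) := by
    intro c hc
    rw [Finset.mem_sdiff] at hc
    obtain ⟨hc1, hc2⟩ := hc
    rw [Finset.mem_filter]
    refine ⟨hc1, SatP_Psi_of_good V F c h ?_⟩
    intro ab hab hcon
    exact hc2 (by rw [hbad, Finset.mem_filter]; exact ⟨hc1, ab, hab, hcon⟩)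
  have hbadcard : bad.card ≤ F.length := by
    have himg : bad ⊆ F.toFinset.image
        (fun ab => (V.card - 1 + (V.card - (rp q V ab.2) % V.card)) % V.card) := by
      intro c hc
      rw [hbad, Finset.mem_filter, Finset.mem_range] at hc
      obtain ⟨hclt, ab, hab, habc⟩ := hc
      rw [Finset.mem_image]
      refine ⟨ab, List.mem_toFinset.2 hab, ?_⟩
      have := mod_shift hm (rp q V ab.2) hclt
      rw [Nat.add_comm c (rp q V ab.2), habc] at this
      exact this
    calc bad.card ≤ _ := Finset.card_le_card himg
      _ ≤ F.toFinset.card := Finset.card_image_le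
      _ ≤ F.length := F.toFinset_card_le
  have h1 := Finset.card_le_card hsub
  have h2 : (Finset.range V.card).card - bad.card ≤ (Finset.range V.card \ bad).card :=
    Finset.le_card_sdiff bad (Finset.range V.card)
  rw [Finset.card_range] at h2
  omega

lemma hazard (x : Fin n) (hx : x ∈ V) :
    (V.card - F.length) * (Finset.univ.filter (fun q => SatP V F q ∧ rp q V x = 0)).card
      ≤ (Finset.univ.filter (fun q => SatP V F q)).card := by
  have hm : 0 < V.card := Finset.card_pos.2 ⟨x, hx⟩
  set m := V.card with hmdef
  set A' := Finset.univ.filter (fun q : Equiv.Perm (Fin n) => SatC V F q ∧ rp q V x = 0) with hA'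
  set Cc := Finset.univ.filter (fun q : Equiv.Perm (Fin n) => SatC V F q) with hCc
  set B := Finset.univ.filter (fun q : Equiv.Perm (Fin n) => SatP V F q) with hB
  -- step 1 : A ⊆ A'
  have step1 : (Finset.univ.filter (fun q => SatP V F q ∧ rp q V x = 0)).card ≤ A'.card := by
    apply Finset.card_le_card
    intro q hq
    rw [Finset.mem_filter] at hq ⊢
    exact ⟨hq.1, SatP_SatC V F hq.2.1, hq.2.2⟩
  -- step 2 : m * #A' ≤ #Cc
  have step2 : m * A'.card ≤ Cc.card := by
    have : (A' ×ˢ Finset.range m).card ≤ Cc.card := by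
      apply Finset.card_le_card_of_injOn (fun qc => Psi V qc.2 qc.1)
      · rintro ⟨q, c⟩ hqc
        rw [Finset.mem_coe, Finset.mem_product] at hqc
        rw [hA', Finset.mem_filter] at hqc
        rw [Finset.mem_coe, hCc, Finset.mem_filter]
        exact ⟨Finset.mem_univ _, SatC_Psi V F c hqc.1.2.1⟩
      · rintro ⟨q, c⟩ hqc ⟨q', c'⟩ hqc' heq0
        have heq : Psi V c q = Psi V c' q' := heq0
        simp only [Finset.mem_coe, Finset.mem_product, hA', Finset.mem_filter,
          Finset.mem_range] at hqc hqc'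
        have hc : rp (Psi V c q) V x = c := by
          rw [rp_Psi V c q hx, hqc.1.2.2, Nat.zero_add, Nat.mod_eq_of_lt hqc.2]
        have hc' : rp (Psi V c' q') V x = c' := by
          rw [rp_Psi V c' q' hx, hqc'.1.2.2, Nat.zero_add, Nat.mod_eq_of_lt hqc'.2]
        have hcc : c = c' := by rw [← hc, ← hc', heq]
        subst hcc
        have := Psi_injective V c heq
        rw [this]
      
    rwa [Finset.card_product, Finset.card_range, Nat.mul_comm] at this
  -- step 3 : (m - len) * #Cc ≤ m * #B
  have step3 : (m - F.length) * Cc.card ≤ m * B.card := by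
    have hlow : (m - F.length) * Cc.card ≤
        (Cc.sigma (fun q => (Finset.range m).filter (fun c => SatP V F (Psi V c q)))).card := by
      rw [Finset.card_sigma]
      calc (m - F.length) * Cc.card = Cc.card * (m - F.length) := Nat.mul_comm _ _
        _ = ∑ _q ∈ Cc, (m - F.length) := by rw [Finset.sum_const, smul_eq_mul]
        _ ≤ _ := by
            apply Finset.sum_le_sum
            intro q hq
            rw [hCc, Finset.mem_filter] at hq
            exact good_card V F hm hq.2
    have hup : (Cc.sigma (fun q => (Finset.range m).filter (fun c => SatP V F (Psi V c q)))).card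
        ≤ (B ×ˢ Finset.range m).card := by
      apply Finset.card_le_card_of_injOn (fun qc => (Psi V qc.2 qc.1, qc.2))
      · rintro ⟨q, c⟩ hqc
        rw [Finset.mem_coe, Finset.mem_sigma] at hqc
        obtain ⟨hq, hc⟩ := hqc
        rw [Finset.mem_filter] at hc
        rw [Finset.mem_coe, Finset.mem_product, hB, Finset.mem_filter]
        exact ⟨⟨Finset.mem_univ _, hc.2⟩, hc.1⟩
      · rintro ⟨q, c⟩ hqc ⟨q', c'⟩ hqc' heq0
        have heq : (Psi V c q, c) = (Psi V c' q', c') := heq0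
        simp only [Prod.mk.injEq] at heq
        obtain ⟨h1, h2⟩ := heq
        subst h2
        have := Psi_injective V c h1
        rw [Sigma.mk.inj_iff]
        exact ⟨this, HEq.rfl⟩
    calc (m - F.length) * Cc.card ≤ _ := hlow
      _ ≤ _ := hup
      _ = B.card * m := by rw [Finset.card_product, Finset.card_range]
      _ = m * B.card := Nat.mul_comm _ _
  -- combine
  have chain : m * ((m - F.length) * (Finset.univ.filter
      (fun q => SatP V F q ∧ rp q V x = 0)).card) ≤ m * B.card := by
    calc m * ((m - F.length) * _) ≤ m * ((m - F.length) * A'.card) := by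
          exact Nat.mul_le_mul_left _ (Nat.mul_le_mul_left _ step1)
      _ = (m - F.length) * (m * A'.card) := by ring
      _ ≤ (m - F.length) * Cc.card := Nat.mul_le_mul_left _ step2
      _ ≤ m * B.card := step3
  exact Nat.le_of_mul_le_mul_left chain hm

end hazard

/-! ### Phase D : analysis of the run for a fixed man `K` and fixed other preferences -/

section run
open scoped Classical

variable (S : Strategy n) (K : Fin n) (base : Fin n → Equiv.Perm (Fin n))

/-- profile where man `K` has preferences `q` and the others follow `base`. -/
def mpq (q : Equiv.Perm (Fin n)) : Fin n → Equiv.Perm (Fin n) :=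
  fun j => if j = K then q else base j

lemma mpq_K (q : Equiv.Perm (Fin n)) : mpq K base q K = q := if_pos rfl

lemma mpq_ne (q : Equiv.Perm (Fin n)) {j : Fin n} (h : j ≠ K) : mpq K base q j = base j :=
  if_neg h

/-- proposal of round `t` when man `K` has preferences `q`. -/
def prop (q : Equiv.Perm (Fin n)) (t : ℕ) : Equiv.Perm (Fin n) :=
  proposal S (advF (mpq K base q)) t

def sd0 (j : ℕ) : Fin n := sdF (mpq K base 1) j

def V0 : Finset (Fin n) := rem (mpq K base 1) K.val

lemma rem_mpq (q : Equiv.Perm (Fin n)) {k : ℕ} (hk : k ≤ K.val) :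
    rem (mpq K base q) k = rem (mpq K base 1) k :=
  (sdF_indep (mpq K base q) (mpq K base 1) K.val
    (fun j hj => by rw [mpq_ne K base q (by intro h; subst h; omega),
      mpq_ne K base 1 (by intro h; subst h; omega)]) k hk).1

lemma sdF_mpq (q : Equiv.Perm (Fin n)) {k : ℕ} (hk : k < K.val) :
    sdF (mpq K base q) k = sd0 K base k :=
  (sdF_indep (mpq K base q) (mpq K base 1) K.val
    (fun j hj => by rw [mpq_ne K base q (by intro h; subst h; omega),
      mpq_ne K base 1 (by intro h; subst h; omega)]) k (le_of_lt hk)).2 hk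

lemma V0_eq (q : Equiv.Perm (Fin n)) : rem (mpq K base q) K.val = V0 K base :=
  rem_mpq K base q (le_refl _)

lemma V0_card : (V0 K base).card = n - K.val := rem_card _ _ K.isLt.le

/-- prefix condition : men before `K` are matched according to serial dictatorship. -/
def preOK (M : Equiv.Perm (Fin n)) : Prop :=
  ∀ j : Fin n, j.val < K.val → M.symm j = sd0 K base j.val

/-- success at round `t` : man `K` is matched to his top remaining woman. -/
def succAt (q : Equiv.Perm (Fin n)) (t : ℕ) : Prop :=
  (prop S K base q t).symm K = sdF (mpq K base q) K.val

variable (hfin : ∀ q : Equiv.Perm (Fin n),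
  ∃ t, IsStable (Pm (mpq K base q)) (prop S K base q t))

include hfin

lemma FSex (q : Equiv.Perm (Fin n)) :
    ∃ t, preOK K base (prop S K base q t) ∧ succAt S K base q t := by
  obtain ⟨t, ht⟩ := hfin q
  have h := stable_matches_sd _ _ ht
  refine ⟨t, fun j hj => ?_, h K⟩
  rw [h j, sdF_mpq K base q hj]

/-- first success round. -/
def FS (q : Equiv.Perm (Fin n)) : ℕ := Nat.find (FSex S K base hfin q)

lemma FS_spec (q : Equiv.Perm (Fin n)) :
    preOK K base (prop S K base q (FS S K base hfin q)) ∧ succAt S K base q (FS S K base hfin q) :=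
  Nat.find_spec (FSex S K base hfin q)

lemma FS_min {q : Equiv.Perm (Fin n)} {t : ℕ} (ht : t < FS S K base hfin q) :
    ¬ (preOK K base (prop S K base q t) ∧ succAt S K base q t) :=
  Nat.find_min (FSex S K base hfin q) ht

/-- number of preOK rounds before `t`. -/
def cntP (q : Equiv.Perm (Fin n)) (t : ℕ) : ℕ :=
  ((Finset.range t).filter (fun s => preOK K base (prop S K base q s))).card

/-- number of preOK rounds before the first success. -/
def G (q : Equiv.Perm (Fin n)) : ℕ := cntP S K base q (FS S K base hfin q)

omit hfin

lemma cntP_succ (q : Equiv.Perm (Fin n)) (t : ℕ) :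
    cntP S K base q (t + 1) =
      cntP S K base q t + (if preOK K base (prop S K base q t) then 1 else 0) := by
  rw [cntP, cntP, Finset.range_add_one, Finset.filter_insert]
  split
  · rw [Finset.card_insert_of_notMem (by simp)]
  · rfl

lemma cntP_mono (q : Equiv.Perm (Fin n)) {s t : ℕ} (h : s ≤ t) :
    cntP S K base q s ≤ cntP S K base q t :=
  Finset.card_le_card (Finset.filter_subset_filter _ (by
    intro a ha; rw [Finset.mem_range] at ha ⊢; omega))

/-- the list of facts revealed about man `K` in rounds `< t`. -/
def realF (q : Equiv.Perm (Fin n)) : ℕ → List (Fin n × Fin n)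
  | 0 => []
  | t + 1 => realF q t ++
      (if preOK K base (prop S K base q t) then
        [((prop S K base q t).symm K, wNext (mpq K base q) K ((prop S K base q t).symm K))]
      else [])

lemma realF_len (q : Equiv.Perm (Fin n)) (t : ℕ) :
    (realF S K base q t).length = cntP S K base q t := by
  induction t with
  | zero => simp [realF, cntP]
  | succ t ih =>
      rw [realF, List.length_append, ih, cntP_succ]
      split <;> simp

lemma realF_mono (q : Equiv.Perm (Fin n)) {s t : ℕ} (h : s ≤ t) :
    ∀ ab ∈ realF S K base q s, ab ∈ realF S K base q t := by
  induction t with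
  | zero => intro ab hab; rw [Nat.le_zero.1 h] at hab; exact hab
  | succ t ih =>
      intro ab hab
      rcases Nat.lt_or_ge s (t+1) with h' | h'
      · rw [realF, List.mem_append]
        exact Or.inl (ih (Nat.lt_succ_iff.1 h') ab hab)
      · have : s = t + 1 := le_antisymm h h'
        subst this; exact hab

lemma realF_append (q : Equiv.Perm (Fin n)) {s t : ℕ} (h : s ≤ t) :
    ∃ L, realF S K base q t = realF S K base q s ++ L := by
  induction t with
  | zero => exact ⟨[], by rw [Nat.le_zero.1 h]; simp⟩
  | succ t ih =>
      rcases Nat.lt_or_ge s (t+1) with h' | h'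
      · obtain ⟨L, hL⟩ := ih (Nat.lt_succ_iff.1 h')
        exact ⟨L ++ _, by rw [realF, hL, List.append_assoc]⟩
      · have : s = t + 1 := le_antisymm h h'
        subst this; exact ⟨[], by simp⟩

/-- intermediate value for the count. -/
lemma cnt_iv (q : Equiv.Perm (Fin n)) {i T : ℕ} (h : i < cntP S K base q T) :
    ∃ t < T, preOK K base (prop S K base q t) ∧ cntP S K base q t = i := by
  induction T with
  | zero => simp [cntP] at h
  | succ T ih =>
      rw [cntP_succ] at h
      by_cases hp : preOK K base (prop S K base q T)
      · rw [if_pos hp] at h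
        rcases Nat.lt_or_ge i (cntP S K base q T) with h' | h'
        · obtain ⟨t, ht, h1, h2⟩ := ih h'
          exact ⟨t, ht.trans (Nat.lt_succ_self T), h1, h2⟩
        · have : i = cntP S K base q T := by omega
          exact ⟨T, Nat.lt_succ_self T, hp, this.symm⟩
      · rw [if_neg hp] at h
        obtain ⟨t, ht, h1, h2⟩ := ih h
        exact ⟨t, ht.trans (Nat.lt_succ_self T), h1, h2⟩

include hfin

lemma nxt_ex (q : Equiv.Perm (Fin n)) {i : ℕ} (hi : i ≤ G S K base hfin q) :
    ∃ t, (preOK K base (prop S K base q t) ∧ cntP S K base q t = i) ∧ t ≤ FS S K base hfin q := by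
  rcases Nat.lt_or_ge i (G S K base hfin q) with h | h
  · obtain ⟨t, ht, h1, h2⟩ := cnt_iv S K base q h
    exact ⟨t, ⟨h1, h2⟩, le_of_lt ht⟩
  · have hGi : i = G S K base hfin q := by omega
    exact ⟨FS S K base hfin q, ⟨(FS_spec S K base hfin q).1, hGi.symm⟩, le_refl _⟩

lemma nxt_ex2 (q : Equiv.Perm (Fin n)) {i : ℕ} (hi : i ≤ G S K base hfin q) :
    ∃ t, preOK K base (prop S K base q t) ∧ cntP S K base q t = i :=
  ⟨(nxt_ex S K base hfin q hi).choose, (nxt_ex S K base hfin q hi).choose_spec.1⟩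

/-- round of the `(i+1)`-st preOK event. -/
def NXT (q : Equiv.Perm (Fin n)) {i : ℕ} (hi : i ≤ G S K base hfin q) : ℕ :=
  Nat.find (nxt_ex2 S K base hfin q hi)

lemma NXT_spec (q : Equiv.Perm (Fin n)) {i : ℕ} (hi : i ≤ G S K base hfin q) :
    preOK K base (prop S K base q (NXT S K base hfin q hi)) ∧
      cntP S K base q (NXT S K base hfin q hi) = i :=
  Nat.find_spec (nxt_ex2 S K base hfin q hi)

lemma NXT_min (q : Equiv.Perm (Fin n)) {i : ℕ} (hi : i ≤ G S K base hfin q) {t : ℕ}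
    (ht : preOK K base (prop S K base q t) ∧ cntP S K base q t = i) :
    NXT S K base hfin q hi ≤ t :=
  Nat.find_min' (nxt_ex2 S K base hfin q hi) ht

lemma NXT_le_FS (q : Equiv.Perm (Fin n)) {i : ℕ} (hi : i ≤ G S K base hfin q) :
    NXT S K base hfin q hi ≤ FS S K base hfin q := by
  obtain ⟨t, ht, hle⟩ := nxt_ex S K base hfin q hi
  exact (NXT_min S K base hfin q hi ht).trans hle

/-- `G ≥ i+1` iff no success at the `(i+1)`-st preOK round. -/
lemma G_succ_iff (q : Equiv.Perm (Fin n)) {i : ℕ} (hi : i ≤ G S K base hfin q) :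
    i + 1 ≤ G S K base hfin q ↔ ¬ succAt S K base q (NXT S K base hfin q hi) := by
  constructor
  · intro h
    obtain ⟨t, ht, h1, h2⟩ := cnt_iv S K base q (h : i < cntP S K base q (FS S K base hfin q))
    have hle : NXT S K base hfin q hi ≤ t := NXT_min S K base hfin q hi ⟨h1, h2⟩
    have hlt : NXT S K base hfin q hi < FS S K base hfin q := lt_of_le_of_lt hle ht
    intro hsucc
    exact FS_min S K base hfin hlt ⟨(NXT_spec S K base hfin q hi).1, hsucc⟩
  · intro h
    have hle := NXT_le_FS S K base hfin q hi
    have hne : NXT S K base hfin q hi ≠ FS S K base hfin q := by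
      intro he
      exact h (he ▸ (FS_spec S K base hfin q).2)
    have hlt : NXT S K base hfin q hi < FS S K base hfin q := lt_of_le_of_ne hle hne
    have : cntP S K base q (NXT S K base hfin q hi + 1) = i + 1 := by
      rw [cntP_succ, if_pos (NXT_spec S K base hfin q hi).1, (NXT_spec S K base hfin q hi).2]
    calc i + 1 = cntP S K base q (NXT S K base hfin q hi + 1) := this.symm
      _ ≤ cntP S K base q (FS S K base hfin q) := cntP_mono S K base q hlt
      _ = G S K base hfin q := rfl

end run

section run2
open scoped Classical

variable (S : Strategy n) (K : Fin n) (base : Fin n → Equiv.Perm (Fin n))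

lemma hminK (q : Equiv.Perm (Fin n)) (M : Equiv.Perm (Fin n)) (hpre : preOK K base M) :
    ∀ j : Fin n, j < K → M.symm j = sdF (mpq K base q) j.val := by
  intro j hj
  have hj' : j.val < K.val := hj
  rw [hpre j hj', sdF_mpq K base q hj']

lemma wNext_congr (mp mp' : Fin n → Equiv.Perm (Fin n)) (j w : Fin n)
    (h1 : mp j = mp' j) (h2 : rem mp j.val = rem mp' j.val) :
    wNext mp j w = wNext mp' j w := by
  have habove : aboveSet mp j w = aboveSet mp' j w := by
    rw [aboveSet, aboveSet, h1, h2]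
  simp only [wNext, habove, h1]

lemma minbadF (q : Equiv.Perm (Fin n)) (M : Equiv.Perm (Fin n)) (hpre : preOK K base M)
    (hmis : M.symm K ≠ sdF (mpq K base q) K.val) :
    ∃ hne : (badF (mpq K base q) M).Nonempty, (badF (mpq K base q) M).min' hne = K := by
  have hKmem : K ∈ badF (mpq K base q) M := by simp [badF, hmis]
  have hne : (badF (mpq K base q) M).Nonempty := ⟨K, hKmem⟩
  refine ⟨hne, le_antisymm (Finset.min'_le _ _ hKmem) ?_⟩
  have hmem := (badF (mpq K base q) M).min'_mem hne
  simp only [badF, Finset.mem_filter, Finset.mem_univ, true_and] at hmem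
  by_contra hcon
  rw [not_le] at hcon
  exact hmem (hminK K base q M hpre _ hcon)

lemma respK (q : Equiv.Perm (Fin n)) (M : Equiv.Perm (Fin n)) (hpre : preOK K base M)
    (hmis : M.symm K ≠ sdF (mpq K base q) K.val) (h : Hist n) :
    advF (mpq K base q) h M = (wNext (mpq K base q) K (M.symm K), K) := by
  have hKmem : K ∈ badF (mpq K base q) M := by simp [badF, hmis]
  have hne : (badF (mpq K base q) M).Nonempty := ⟨K, hKmem⟩
  have hmin : (badF (mpq K base q) M).min' hne = K := by
    refine le_antisymm (Finset.min'_le _ _ hKmem) ?_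
    have hmem := (badF (mpq K base q) M).min'_mem hne
    simp only [badF, Finset.mem_filter, Finset.mem_univ, true_and] at hmem
    by_contra hcon
    rw [not_le] at hcon
    exact hmem (hminK K base q M hpre _ hcon)
  rw [advF, dif_pos hne, hmin]

lemma respLow (q q' : Equiv.Perm (Fin n)) (M : Equiv.Perm (Fin n))
    (hnpre : ¬ preOK K base M) (h h' : Hist n) :
    advF (mpq K base q) h M = advF (mpq K base q') h' M := by
  set Bl := Finset.univ.filter
    (fun j : Fin n => j.val < K.val ∧ M.symm j ≠ sd0 K base j.val) with hBl
  have hmemBl : ∀ x : Fin n, x ∈ Bl ↔ (x.val < K.val ∧ M.symm x ≠ sd0 K base x.val) := by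
    intro x
    rw [hBl, Finset.mem_filter]
    simp
  have hBlne : Bl.Nonempty := by
    rw [preOK] at hnpre
    push_neg at hnpre
    obtain ⟨j, hj1, hj2⟩ := hnpre
    exact ⟨j, (hmemBl j).2 ⟨hj1, hj2⟩⟩
  have hmemmin := (hmemBl _).1 (Bl.min'_mem hBlne)
  have key : ∀ qq : Equiv.Perm (Fin n), ∃ hne : (badF (mpq K base qq) M).Nonempty,
      (badF (mpq K base qq) M).min' hne = Bl.min' hBlne := by
    intro qq
    have hmembad : ∀ x : Fin n, x ∈ badF (mpq K base qq) M ↔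
        M.symm x ≠ sdF (mpq K base qq) x.val := by
      intro x; rw [badF, Finset.mem_filter]; simp
    have hsub : ∀ x ∈ Bl, x ∈ badF (mpq K base qq) M := by
      intro j hj
      obtain ⟨hj1, hj2⟩ := (hmemBl j).1 hj
      rw [hmembad, sdF_mpq K base qq hj1]
      exact hj2
    have hne : (badF (mpq K base qq) M).Nonempty :=
      ⟨Bl.min' hBlne, hsub _ (Bl.min'_mem hBlne)⟩
    refine ⟨hne, le_antisymm (Finset.min'_le _ _ (hsub _ (Bl.min'_mem hBlne))) ?_⟩
    set j0 := (badF (mpq K base qq) M).min' hne with hj0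
    have hj0mem := (hmembad j0).1 ((badF (mpq K base qq) M).min'_mem hne)
    have hj0le : j0 ≤ Bl.min' hBlne := Finset.min'_le _ _ (hsub _ (Bl.min'_mem hBlne))
    have hlt : j0.val < K.val := by
      have h0 : j0.val ≤ (Bl.min' hBlne).val := hj0le
      omega
    apply Finset.min'_le
    refine (hmemBl j0).2 ⟨hlt, ?_⟩
    rw [← sdF_mpq K base qq hlt]
    exact hj0mem
  obtain ⟨hne1, hm1⟩ := key q
  obtain ⟨hne2, hm2⟩ := key q'
  rw [advF, dif_pos hne1, advF, dif_pos hne2, hm1, hm2]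
  have hj0K : (Bl.min' hBlne) ≠ K := by
    intro he
    rw [he] at hmemmin
    omega
  have hwn : wNext (mpq K base q) (Bl.min' hBlne) (M.symm (Bl.min' hBlne))
      = wNext (mpq K base q') (Bl.min' hBlne) (M.symm (Bl.min' hBlne)) := by
    apply wNext_congr
    · rw [mpq_ne K base q hj0K, mpq_ne K base q' hj0K]
    · have hle : (Bl.min' hBlne).val ≤ K.val := by omega
      rw [rem_mpq K base q hle, rem_mpq K base q' hle]
  rw [hwn]

variable (hfin : ∀ q : Equiv.Perm (Fin n),
  ∃ t, IsStable (Pm (mpq K base q)) (prop S K base q t))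

include hfin

lemma realF_sat (q : Equiv.Perm (Fin n)) :
    ∀ t, t ≤ FS S K base hfin q → SatP (V0 K base) (realF S K base q t) q := by
  intro t
  induction t with
  | zero => intro _ ab hab; simp [realF] at hab
  | succ t ih =>
      intro ht ab hab
      have hlt : t < FS S K base hfin q := Nat.lt_of_succ_le ht
      rw [realF, List.mem_append] at hab
      rcases hab with hab | hab
      · exact ih (le_of_lt hlt) ab hab
      · by_cases hc : preOK K base (prop S K base q t)
        · rw [if_pos hc, List.mem_singleton] at hab
          subst hab
          have hns : ¬ succAt S K base q t := fun hs => FS_min S K base hfin hlt ⟨hc, hs⟩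
          set M := prop S K base q t with hM
          have hmis : M.symm K ≠ sdF (mpq K base q) K.val := hns
          have hmin := hminK K base q M hc
          have haV : M.symm K ∈ V0 K base := by
            rw [← V0_eq K base q]
            exact partner_mem_rem (mpq K base q) M K hmin
          have hbV : wNext (mpq K base q) K (M.symm K) ∈ V0 K base := by
            have := wNext_mem (mpq K base q) M K hmis hmin
            rw [aboveSet, Finset.mem_filter] at this
            rw [← V0_eq K base q]
            exact this.1
          have hrp := wNext_rp (mpq K base q) M K hmis hmin
          rw [mpq_K, V0_eq] at hrp
          exact ⟨haV, hbV, hrp⟩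
        · rw [if_neg hc] at hab
          simp at hab

lemma runeq (q q' : Equiv.Perm (Fin n)) :
    ∀ t, t ≤ FS S K base hfin q → SatP (V0 K base) (realF S K base q t) q' →
      runHist S (advF (mpq K base q)) t = runHist S (advF (mpq K base q')) t ∧
      realF S K base q' t = realF S K base q t ∧ t ≤ FS S K base hfin q' := by
  intro t
  induction t with
  | zero => intro _ _; exact ⟨rfl, rfl, Nat.zero_le _⟩
  | succ t ih =>
      intro h1 h2
      have hpre_facts : SatP (V0 K base) (realF S K base q t) q' :=
        fun ab hab => h2 ab (realF_mono S K base q (Nat.le_succ t) ab hab)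
      obtain ⟨hrun, hfq, hFS'⟩ := ih (Nat.le_of_succ_le h1) hpre_facts
      have hltq : t < FS S K base hfin q := Nat.lt_of_succ_le h1
      have hprop : prop S K base q t = prop S K base q' t := by
        rw [prop, prop, proposal, proposal, hrun]
      set M := prop S K base q t with hM
      by_cases hc : preOK K base M
      · -- preOK round, not success for q
        have hns : ¬ succAt S K base q t := fun hs => FS_min S K base hfin hltq ⟨hc, hs⟩
        have hmis : M.symm K ≠ sdF (mpq K base q) K.val := hns
        set a := M.symm K with ha
        set b := wNext (mpq K base q) K a with hb
        have hfact_mem : (a, b) ∈ realF S K base q (t+1) := by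
          rw [realF, if_pos hc, List.mem_append]
          exact Or.inr (List.mem_singleton.2 rfl)
        obtain ⟨haV0, hbV0, hrpfact0⟩ := h2 _ hfact_mem
        have haV : a ∈ V0 K base := haV0
        have hbV : b ∈ V0 K base := hbV0
        have hrpfact : rp q' (V0 K base) b + 1 = rp q' (V0 K base) a := hrpfact0
        -- q' also mismatches at K
        have hmis' : M.symm K ≠ sdF (mpq K base q') K.val := by
          intro he
          have h0 : rp q' (V0 K base) (sdF (mpq K base q') K.val) = 0 := by
            have := rp_sdF (mpq K base q') (k := K.val) K.isLt
            rwa [mpN_fin, mpq_K, V0_eq] at this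
          rw [← he, ← ha] at h0
          omega
        -- q' reveals the same pair
        have hb' : wNext (mpq K base q') K a = b := by
          have hmin' := hminK K base q' M hc
          have h1' := wNext_rp (mpq K base q') M K hmis' hmin'
          rw [mpq_K, V0_eq] at h1'
          have hmemw : wNext (mpq K base q') K a ∈ V0 K base := by
            have := wNext_mem (mpq K base q') M K hmis' hmin'
            rw [aboveSet, Finset.mem_filter] at this
            rw [← V0_eq K base q']
            exact this.1
          apply rp_inj_on q' (V0 K base) hmemw hbV
          have : rp q' (V0 K base) (wNext (mpq K base q') K a) + 1
              = rp q' (V0 K base) b + 1 := by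
            rw [h1', hrpfact]
          omega
        have hresp : ∀ hh hh' : Hist n,
            advF (mpq K base q) hh M = advF (mpq K base q') hh' M := by
          intro hh hh'
          rw [respK K base q M hc hmis hh, respK K base q' M hc hmis' hh', hb']
        constructor
        · rw [runHist, runHist, hrun]
          have hSM : S (runHist S (advF (mpq K base q')) t) = M := by
            rw [← hrun]; rfl
          rw [hSM]
          rw [hresp]
        constructor
        · rw [realF, realF, hfq]
          have hcq' : preOK K base (prop S K base q' t) := by rw [← hprop]; exact hc
          rw [if_pos hc, if_pos hcq']
          have : (prop S K base q' t).symm K = a := by rw [← hprop]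
          rw [this, hb']
        · -- t+1 ≤ FS q'
          have hnsq' : ¬ succAt S K base q' t := by
            rw [succAt, ← hprop]
            exact hmis'
          have hne : t ≠ FS S K base hfin q' := by
            intro he
            exact hnsq' (he ▸ (FS_spec S K base hfin q').2)
          omega
      · -- non-preOK round
        have hcq' : ¬ preOK K base (prop S K base q' t) := by rw [← hprop]; exact hc
        constructor
        · rw [runHist, runHist, hrun]
          have hSM : S (runHist S (advF (mpq K base q')) t) = M := by
            rw [← hrun]; rfl
          rw [hSM]
          rw [respLow K base q q' M hc]
        constructor
        · rw [realF, realF, hfq, if_neg hc, if_neg hcq']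
        · have hne : t ≠ FS S K base hfin q' := by
            intro he
            exact hcq' (by rw [hprop] at *; exact (he ▸ (FS_spec S K base hfin q').1))
          omega

end run2

section run3
open scoped Classical

variable (S : Strategy n) (K : Fin n) (base : Fin n → Equiv.Perm (Fin n))
variable (hfin : ∀ q : Equiv.Perm (Fin n),
  ∃ t, IsStable (Pm (mpq K base q)) (prop S K base q t))

/-- code of `q` at level `i` : the facts revealed up to the `(i+1)`-st preOK round. -/
def code (i : ℕ) (q : Equiv.Perm (Fin n)) : List (Fin n × Fin n) :=
  if h : i ≤ G S K base hfin q then realF S K base q (NXT S K base hfin q h) else []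

lemma list_prefix_eq {α : Type*} {X Y : List α} {L : List α} (h : Y = X ++ L)
    (hlen : Y.length = X.length) : X = Y := by
  subst h
  rw [List.length_append] at hlen
  have : L.length = 0 := by omega
  rw [List.eq_nil_of_length_eq_zero this, List.append_nil]

section fiberF
variable {i : ℕ} {q₀ : Equiv.Perm (Fin n)} (hq₀ : i ≤ G S K base hfin q₀)

/-- data transfer to any permutation satisfying the facts of `q₀`. -/
lemma fiber_data (q : Equiv.Perm (Fin n))
    (hSat : SatP (V0 K base) (realF S K base q₀ (NXT S K base hfin q₀ hq₀)) q) :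
    ∃ hi : i ≤ G S K base hfin q,
      code S K base hfin i q = realF S K base q₀ (NXT S K base hfin q₀ hq₀) ∧
      NXT S K base hfin q hi = NXT S K base hfin q₀ hq₀ ∧
      prop S K base q (NXT S K base hfin q₀ hq₀) =
        prop S K base q₀ (NXT S K base hfin q₀ hq₀) := by
  set t₀ := NXT S K base hfin q₀ hq₀ with ht₀
  set F := realF S K base q₀ t₀ with hF
  have hlenF : F.length = i := by
    rw [hF, realF_len, (NXT_spec S K base hfin q₀ hq₀).2]
  obtain ⟨hrun, hfq, hFSq⟩ := runeq S K base hfin q₀ q t₀ (NXT_le_FS S K base hfin q₀ hq₀) hSat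
  have hpropeq : prop S K base q t₀ = prop S K base q₀ t₀ := (congrArg S hrun).symm
  have hpre : preOK K base (prop S K base q t₀) := by
    rw [hpropeq]; exact (NXT_spec S K base hfin q₀ hq₀).1
  have hcnt : cntP S K base q t₀ = i := by
    rw [← realF_len, hfq, ← hF, hlenF]
  have hi : i ≤ G S K base hfin q := by
    rw [G, ← hcnt]
    exact cntP_mono S K base q hFSq
  have hNle : NXT S K base hfin q hi ≤ t₀ := NXT_min S K base hfin q hi ⟨hpre, hcnt⟩
  have hcode : realF S K base q (NXT S K base hfin q hi) = F := by
    obtain ⟨L, hL⟩ := realF_append S K base q hNle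
    have hX : realF S K base q (NXT S K base hfin q hi) = realF S K base q t₀ :=
      list_prefix_eq hL (by
        rw [realF_len, realF_len, hcnt, (NXT_spec S K base hfin q hi).2])
    rw [hX, hfq, hF]
  have hNge : t₀ ≤ NXT S K base hfin q hi := by
    -- run the transfer in the other direction
    have hSat' : SatP (V0 K base) (realF S K base q (NXT S K base hfin q hi)) q₀ := by
      rw [hcode, hF]
      exact realF_sat S K base hfin q₀ t₀ (NXT_le_FS S K base hfin q₀ hq₀)
    obtain ⟨hrun2, hfq2, hFS2⟩ := runeq S K base hfin q q₀ (NXT S K base hfin q hi)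
      ((NXT_le_FS S K base hfin q hi)) hSat'
    have hpropeq2 : prop S K base q₀ (NXT S K base hfin q hi)
        = prop S K base q (NXT S K base hfin q hi) := (congrArg S hrun2).symm
    have hpre2 : preOK K base (prop S K base q₀ (NXT S K base hfin q hi)) := by
      rw [hpropeq2]; exact (NXT_spec S K base hfin q hi).1
    have hcnt2 : cntP S K base q₀ (NXT S K base hfin q hi) = i := by
      rw [← realF_len, hfq2, hcode, hlenF]
    exact NXT_min S K base hfin q₀ hq₀ ⟨hpre2, hcnt2⟩
  have hNXT : NXT S K base hfin q hi = t₀ := le_antisymm hNle hNge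
  refine ⟨hi, ?_, hNXT, hpropeq⟩
  rw [code, dif_pos hi, hNXT, hfq, hF]

include hq₀ in
/-- membership in the fiber is exactly satisfaction of the facts. -/
lemma fiber_eq :
    (Finset.univ.filter (fun q => i ≤ G S K base hfin q)).filter
        (fun q => code S K base hfin i q = code S K base hfin i q₀)
      = Finset.univ.filter (fun q => SatP (V0 K base) (code S K base hfin i q₀) q) := by
  have hcode₀ : code S K base hfin i q₀ = realF S K base q₀ (NXT S K base hfin q₀ hq₀) := by
    rw [code, dif_pos hq₀]
  ext q
  simp only [Finset.mem_filter, Finset.mem_univ, true_and]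
  constructor
  · rintro ⟨hi, hc⟩
    rw [← hc, code, dif_pos hi]
    exact realF_sat S K base hfin q _ (NXT_le_FS S K base hfin q hi)
  · intro hSat
    rw [hcode₀] at hSat ⊢
    obtain ⟨hi, hc, _, _⟩ := fiber_data S K base hfin hq₀ q hSat
    exact ⟨hi, by rw [hc]⟩

/-- the success condition on the fiber is `rp = 0` at the common guess. -/
lemma fiber_succ (q : Equiv.Perm (Fin n))
    (hSat : SatP (V0 K base) (realF S K base q₀ (NXT S K base hfin q₀ hq₀)) q) :
    (i + 1 ≤ G S K base hfin q ↔
      rp q (V0 K base) ((prop S K base q₀ (NXT S K base hfin q₀ hq₀)).symm K) ≠ 0) := by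
  obtain ⟨hi, hc, hNXT, hpropeq⟩ := fiber_data S K base hfin hq₀ q hSat
  rw [G_succ_iff S K base hfin q hi]
  set t₀ := NXT S K base hfin q₀ hq₀ with ht₀
  set gF := (prop S K base q₀ t₀).symm K with hgF
  have hpartner : (prop S K base q (NXT S K base hfin q hi)).symm K = gF := by
    rw [hNXT, hpropeq]
  have hpre : preOK K base (prop S K base q (NXT S K base hfin q hi)) :=
    (NXT_spec S K base hfin q hi).1
  have hgmem : gF ∈ rem (mpq K base q) K.val := by
    rw [← hpartner]
    exact partner_mem_rem (mpq K base q) _ K (hminK K base q _ hpre)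
  have hiff : succAt S K base q (NXT S K base hfin q hi) ↔ rp q (V0 K base) gF = 0 := by
    rw [succAt, hpartner]
    have := rp_zero_iff (mpq K base q) (k := K.val) K.isLt hgmem
    rw [mpN_fin, mpq_K, V0_eq] at this
    exact this.symm
  rw [not_iff_not.2 hiff]

end fiberF

/-- one step of the counting argument. -/
lemma step_count (i : ℕ) :
    ((V0 K base).card - i) * (Finset.univ.filter (fun q => i ≤ G S K base hfin q)).card
      ≤ ((V0 K base).card - i) *
          (Finset.univ.filter (fun q => i + 1 ≤ G S K base hfin q)).card
        + (Finset.univ.filter (fun q => i ≤ G S K base hfin q)).card := by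
  classical
  set m := (V0 K base).card with hm
  set Ai := Finset.univ.filter (fun q => i ≤ G S K base hfin q) with hAi
  set Ai1 := Finset.univ.filter (fun q => i + 1 ≤ G S K base hfin q) with hAi1
  have hsub : Ai1 ⊆ Ai := by
    intro q hq
    rw [hAi1, Finset.mem_filter] at hq
    rw [hAi, Finset.mem_filter]
    exact ⟨hq.1, by omega⟩
  set img := Ai.image (code S K base hfin i) with himg
  have h1 : Ai.card = ∑ F ∈ img, (Ai.filter (fun q => code S K base hfin i q = F)).card :=
    Finset.card_eq_sum_card_fiberwise (fun q hq => Finset.mem_image_of_mem _ hq)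
  have h2 : Ai1.card = ∑ F ∈ img, (Ai1.filter (fun q => code S K base hfin i q = F)).card :=
    Finset.card_eq_sum_card_fiberwise (fun q hq => Finset.mem_image_of_mem _ (hsub hq))
  have key : ∀ F ∈ img,
      (m - i) * (Ai.filter (fun q => code S K base hfin i q = F)).card
        ≤ (m - i) * (Ai1.filter (fun q => code S K base hfin i q = F)).card
          + (Ai.filter (fun q => code S K base hfin i q = F)).card := by
    intro F hF
    rw [himg, Finset.mem_image] at hF
    obtain ⟨q₀, hq₀mem, hq₀F⟩ := hF
    rw [hAi, Finset.mem_filter] at hq₀mem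
    have hq₀ : i ≤ G S K base hfin q₀ := hq₀mem.2
    set t₀ := NXT S K base hfin q₀ hq₀ with ht₀
    set gF := (prop S K base q₀ t₀).symm K with hgF
    have hcode₀ : code S K base hfin i q₀ = realF S K base q₀ t₀ := by
      rw [code, dif_pos hq₀]
    have hlenF : (realF S K base q₀ t₀).length = i := by
      rw [realF_len, (NXT_spec S K base hfin q₀ hq₀).2]
    -- identify the fibers
    have hE1 : Ai.filter (fun q => code S K base hfin i q = F)
        = Finset.univ.filter (fun q => SatP (V0 K base) (realF S K base q₀ t₀) q) := by
      rw [← hq₀F, hAi]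
      rw [fiber_eq S K base hfin hq₀, hcode₀]
    have hE2 : Ai1.filter (fun q => code S K base hfin i q = F)
        = (Finset.univ.filter (fun q => SatP (V0 K base) (realF S K base q₀ t₀) q)).filter
            (fun q => rp q (V0 K base) gF ≠ 0) := by
      ext q
      simp only [Finset.mem_filter, Finset.mem_univ, true_and, hAi1]
      constructor
      · rintro ⟨hi1, hc⟩
        have hi0 : i ≤ G S K base hfin q := by omega
        have hSat : SatP (V0 K base) (realF S K base q₀ t₀) q := by
          have : q ∈ Ai.filter (fun q => code S K base hfin i q = F) := by
            rw [hAi, Finset.mem_filter, Finset.mem_filter]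
            exact ⟨⟨Finset.mem_univ _, hi0⟩, hc⟩
          rw [hE1, Finset.mem_filter] at this
          exact this.2
        refine ⟨hSat, ?_⟩
        exact (fiber_succ S K base hfin hq₀ q hSat).1 hi1
      · rintro ⟨hSat, hrp⟩
        have hi1 := (fiber_succ S K base hfin hq₀ q hSat).2 hrp
        refine ⟨hi1, ?_⟩
        obtain ⟨hi', hc, _, _⟩ := fiber_data S K base hfin hq₀ q hSat
        rw [hc, ← hcode₀, hq₀F]
    -- the hazard bound
    have hgmem : gF ∈ V0 K base := by
      rw [← V0_eq K base q₀]
      exact partner_mem_rem (mpq K base q₀) _ K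
        (hminK K base q₀ _ (NXT_spec S K base hfin q₀ hq₀).1)
    have hhaz := hazard (V0 K base) (realF S K base q₀ t₀) gF hgmem
    rw [hlenF] at hhaz
    set SatSet := Finset.univ.filter
      (fun q => SatP (V0 K base) (realF S K base q₀ t₀) q) with hSatSet
    have hsplit : (SatSet.filter (fun q => rp q (V0 K base) gF ≠ 0)).card
        + (SatSet.filter (fun q => rp q (V0 K base) gF = 0)).card = SatSet.card := by
      have h := Finset.card_filter_add_card_filter_not
        (s := SatSet) (p := fun q => rp q (V0 K base) gF = 0)
      have he : SatSet.filter (fun q => ¬ rp q (V0 K base) gF = 0)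
          = SatSet.filter (fun q => rp q (V0 K base) gF ≠ 0) := by
        apply Finset.filter_congr
        intro q _
        simp [Ne]
      rw [he] at h
      omega
    have hz : (m - i) * (SatSet.filter (fun q => rp q (V0 K base) gF = 0)).card
        ≤ SatSet.card := by
      have : SatSet.filter (fun q => rp q (V0 K base) gF = 0)
          = Finset.univ.filter (fun q => SatP (V0 K base) (realF S K base q₀ t₀) q
              ∧ rp q (V0 K base) gF = 0) := by
        rw [hSatSet, Finset.filter_filter]
      rw [this]
      exact hhaz
    rw [hE1, hE2]
    set X := (SatSet.filter (fun q => rp q (V0 K base) gF ≠ 0)).card with hX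
    set Y := (SatSet.filter (fun q => rp q (V0 K base) gF = 0)).card with hY
    have hXY : X + Y = SatSet.card := hsplit
    calc (m - i) * SatSet.card = (m - i) * X + (m - i) * Y := by
          rw [← Nat.mul_add, hXY]
      _ ≤ (m - i) * X + SatSet.card := by
          exact Nat.add_le_add_left hz _
  calc (m - i) * Ai.card = ∑ F ∈ img, (m - i) * (Ai.filter (fun q => code S K base hfin i q = F)).card := by
        rw [h1, Finset.mul_sum]
    _ ≤ ∑ F ∈ img, ((m - i) * (Ai1.filter (fun q => code S K base hfin i q = F)).card
          + (Ai.filter (fun q => code S K base hfin i q = F)).card) :=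
        Finset.sum_le_sum key
    _ = (m - i) * Ai1.card + Ai.card := by
        rw [Finset.sum_add_distrib, ← Finset.mul_sum, ← h1, ← h2]

end run3

section run4
open scoped Classical

variable (S : Strategy n) (K : Fin n) (base : Fin n → Equiv.Perm (Fin n))
variable (hfin : ∀ q : Equiv.Perm (Fin n),
  ∃ t, IsStable (Pm (mpq K base q)) (prop S K base q t))

lemma A_lb (i : ℕ) : ((V0 K base).card - i) * Fintype.card (Equiv.Perm (Fin n))
    ≤ (V0 K base).card * (Finset.univ.filter (fun q => i ≤ G S K base hfin q)).card := by
  induction i with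
  | zero =>
      have h0 : Finset.univ.filter (fun q : Equiv.Perm (Fin n) => 0 ≤ G S K base hfin q)
          = Finset.univ := Finset.filter_true_of_mem (fun _ _ => Nat.zero_le _)
      rw [h0, Finset.card_univ, Nat.sub_zero]
  | succ i ih =>
      set m := (V0 K base).card with hmv
      set N := Fintype.card (Equiv.Perm (Fin n)) with hN
      set X := (Finset.univ.filter (fun q => i ≤ G S K base hfin q)).card with hX
      set Y := (Finset.univ.filter (fun q => i + 1 ≤ G S K base hfin q)).card with hY
      by_cases hlt : i < m
      · have hs : (m - i) * X ≤ (m - i) * Y + X := step_count S K base hfin i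
        have e1 : (m - i - 1) * X + X = (m - i) * X := by
          have h1 : m - i - 1 + 1 = m - i := by omega
          calc (m - i - 1) * X + X = ((m - i - 1) + 1) * X := by ring
            _ = (m - i) * X := by rw [h1]
        have e2 : (m - i - 1) * X ≤ (m - i) * Y := by omega
        have e3 : (m - i) * ((m - i - 1) * N) ≤ (m - i) * (m * Y) := by
          calc (m - i) * ((m - i - 1) * N) = (m - i - 1) * ((m - i) * N) := by ring
            _ ≤ (m - i - 1) * (m * X) := Nat.mul_le_mul_left _ ih
            _ = m * ((m - i - 1) * X) := by ring
            _ ≤ m * ((m - i) * Y) := Nat.mul_le_mul_left _ e2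
            _ = (m - i) * (m * Y) := by ring
        have e4 := Nat.le_of_mul_le_mul_left e3 (by omega : 0 < m - i)
        have e5 : m - (i + 1) = m - i - 1 := by omega
        rw [e5]
        exact e4
      · have h0 : m - (i + 1) = 0 := by omega
        rw [h0, Nat.zero_mul]
        exact Nat.zero_le _

lemma sumG : Fintype.card (Equiv.Perm (Fin n)) * (n - K.val - 1)
    ≤ 2 * ∑ q : Equiv.Perm (Fin n), G S K base hfin q := by
  set m := (V0 K base).card with hmv
  set N := Fintype.card (Equiv.Perm (Fin n)) with hN
  have hmval : m = n - K.val := V0_card K base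
  have hm1 : 1 ≤ m := by have := K.isLt; omega
  have h1 : ∑ j ∈ Finset.range m,
      (Finset.univ.filter (fun q => j + 1 ≤ G S K base hfin q)).card
      ≤ ∑ q : Equiv.Perm (Fin n), G S K base hfin q := by
    have hswap : ∑ j ∈ Finset.range m,
        (Finset.univ.filter (fun q => j + 1 ≤ G S K base hfin q)).card
        = ∑ q : Equiv.Perm (Fin n),
            ((Finset.range m).filter (fun j => j + 1 ≤ G S K base hfin q)).card := by
      simp only [Finset.card_filter]
      rw [Finset.sum_comm]
    rw [hswap]
    apply Finset.sum_le_sum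
    intro q _
    calc ((Finset.range m).filter (fun j => j + 1 ≤ G S K base hfin q)).card
        ≤ (Finset.range (G S K base hfin q)).card := by
          apply Finset.card_le_card
          intro j hj
          rw [Finset.mem_filter, Finset.mem_range] at hj
          rw [Finset.mem_range]
          omega
      _ = G S K base hfin q := Finset.card_range _
  have h2 : 2 * ∑ j ∈ Finset.range m, (m - (j + 1)) = m * (m - 1) := by
    have e2 : ∑ j ∈ Finset.range m, (m - (j + 1)) = ∑ j ∈ Finset.range m, (m - 1 - j) := by
      apply Finset.sum_congr rfl
      intro j _
      omega
    have e3 : ∑ j ∈ Finset.range m, (m - 1 - j) = ∑ j ∈ Finset.range m, j :=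
      Finset.sum_range_reflect (fun j => j) m
    have e4 := Finset.sum_range_id_mul_two m
    rw [e2, e3]
    omega
  have hA : ∑ j ∈ Finset.range m, ((m - (j + 1)) * N)
      = (∑ j ∈ Finset.range m, (m - (j + 1))) * N := by rw [Finset.sum_mul]
  have h3 : N * (m * (m - 1)) ≤ 2 * (m * ∑ q : Equiv.Perm (Fin n), G S K base hfin q) := by
    calc N * (m * (m - 1)) = N * (2 * ∑ j ∈ Finset.range m, (m - (j + 1))) := by rw [h2]
      _ = 2 * ((∑ j ∈ Finset.range m, (m - (j + 1))) * N) := by ring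
      _ = 2 * ∑ j ∈ Finset.range m, ((m - (j + 1)) * N) := by rw [hA]
      _ ≤ 2 * ∑ j ∈ Finset.range m,
            (m * (Finset.univ.filter (fun q => j + 1 ≤ G S K base hfin q)).card) := by
          apply Nat.mul_le_mul_left
          apply Finset.sum_le_sum
          intro j _
          exact A_lb S K base hfin (j + 1)
      _ = 2 * (m * ∑ j ∈ Finset.range m,
            (Finset.univ.filter (fun q => j + 1 ≤ G S K base hfin q)).card) := by
          simp only [Finset.mul_sum]
      _ ≤ 2 * (m * ∑ q : Equiv.Perm (Fin n), G S K base hfin q) := by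
          apply Nat.mul_le_mul_left
          exact Nat.mul_le_mul_left _ h1
  have h4 : m * (N * (m - 1)) ≤ m * (2 * ∑ q : Equiv.Perm (Fin n), G S K base hfin q) := by
    calc m * (N * (m - 1)) = N * (m * (m - 1)) := by ring
      _ ≤ 2 * (m * ∑ q, G S K base hfin q) := h3
      _ = m * (2 * ∑ q, G S K base hfin q) := by ring
  have h5 := Nat.le_of_mul_le_mul_left h4 (by omega : 0 < m)
  have he : n - K.val - 1 = m - 1 := by omega
  rw [he]
  exact h5

end run4

section final
open scoped Classical

variable (S : Strategy n)

def respman (mp : Fin n → Equiv.Perm (Fin n)) (s : ℕ) : Fin n :=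
  if h : (badF mp (proposal S (advF mp) s)).Nonempty
  then (badF mp (proposal S (advF mp) s)).min' h
  else ⟨0, Nat.pos_of_ne_zero (NeZero.ne n)⟩

def tKd (mp : Fin n → Equiv.Perm (Fin n)) (K : Fin n) (τv : ℕ) : ℕ :=
  ((Finset.range τv).filter (fun s => respman S mp s = K)).card

lemma tKd_sum (mp : Fin n → Equiv.Perm (Fin n)) (τv : ℕ) :
    τv = ∑ K : Fin n, tKd S mp K τv := by
  have := Finset.card_eq_sum_card_fiberwise (s := Finset.range τv) (t := Finset.univ)
    (f := respman S mp) (fun x _ => Finset.mem_univ _)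
  rw [Finset.card_range] at this
  exact this

end final

end Stmt8

set_option maxHeartbeats 1000000 in
open scoped Classical in
/-- for every `n ≥ 3` divisible by 3, there exist a fixed common
preference order `wp` for all the women and an adversary (a response rule depending
on the realized men's preference profile and the history, valid for every realized
profile) such that for every deterministic learning strategy, the expected number of
matchings proposed before a stable matching is proposed — the expectation taken with
the men's preference orders i.i.d. uniform, i.e. uniform over all profiles
`mp : Fin n → Equiv.Perm (Fin n)` — is at least `n²/9`.  (For each realized profile
`mp`, `T mp` is any index of a stable proposal in the corresponding run, so that the
number of matchings proposed before a stable one is at most `T mp`.) -/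
theorem stmt8 (n : ℕ) (hn : 3 ≤ n) (hdvd : 3 ∣ n) :
    ∃ (wp : Equiv.Perm (Fin n))
      (adv : (Fin n → Equiv.Perm (Fin n)) → Adversary n),
      (∀ mp : Fin n → Equiv.Perm (Fin n),
        ValidAdv ⟨fun _ => wp, mp⟩ (adv mp)) ∧
      ∀ S : Strategy n,
        ∀ T : (Fin n → Equiv.Perm (Fin n)) → ℕ,
          (∀ mp, IsStable ⟨fun _ => wp, mp⟩ (proposal S (adv mp) (T mp))) →
          (n : ℝ) ^ 2 / 9 ≤
            (∑ mp : Fin n → Equiv.Perm (Fin n), (T mp : ℝ)) /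
              (Fintype.card (Fin n → Equiv.Perm (Fin n)) : ℝ) := by
  haveI : NeZero n := ⟨by omega⟩
  refine ⟨1, Stmt8.advF, fun mp => Stmt8.advF_valid mp, ?_⟩
  intro S T hT
  have hex : ∀ mp : Fin n → Equiv.Perm (Fin n),
      ∃ t, IsStable (Stmt8.Pm mp) (proposal S (Stmt8.advF mp) t) := fun mp => ⟨T mp, hT mp⟩
  set τ : (Fin n → Equiv.Perm (Fin n)) → ℕ := fun mp => Nat.find (hex mp) with hτdef
  have hτle : ∀ mp, τ mp ≤ T mp := fun mp => Nat.find_min' _ (hT mp)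
  set NN := Fintype.card (Fin n → Equiv.Perm (Fin n)) with hNN
  -- ### the per-man lower bound
  have hperK : ∀ K : Fin n,
      NN * (n - K.val - 1) ≤ 2 * ∑ mp : Fin n → Equiv.Perm (Fin n),
        Stmt8.tKd S mp K (τ mp) := by
    intro K
    set e := Equiv.funSplitAt K (Equiv.Perm (Fin n)) with he
    have hsum1 : ∑ mp, Stmt8.tKd S mp K (τ mp)
        = ∑ rr : { j : Fin n // j ≠ K } → Equiv.Perm (Fin n), ∑ q : Equiv.Perm (Fin n),
            Stmt8.tKd S (e.symm (q, rr)) K (τ (e.symm (q, rr))) := by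
      rw [← Equiv.sum_comp e.symm (fun mp => Stmt8.tKd S mp K (τ mp)), Fintype.sum_prod_type]
      exact Finset.sum_comm
    have hcard : NN = Fintype.card (Equiv.Perm (Fin n))
        * Fintype.card ({ j : Fin n // j ≠ K } → Equiv.Perm (Fin n)) := by
      rw [hNN, Fintype.card_congr e, Fintype.card_prod]
    -- per fixed rest
    have hper : ∀ rr : { j : Fin n // j ≠ K } → Equiv.Perm (Fin n),
        Fintype.card (Equiv.Perm (Fin n)) * (n - K.val - 1)
          ≤ 2 * ∑ q : Equiv.Perm (Fin n), Stmt8.tKd S (e.symm (q, rr)) K (τ (e.symm (q, rr))) := by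
      intro rr
      set base : Fin n → Equiv.Perm (Fin n) :=
        fun j => if h : j = K then 1 else rr ⟨j, h⟩ with hbase
      have hmpq : ∀ q, e.symm (q, rr) = Stmt8.mpq K base q := by
        intro q
        funext j
        by_cases hj : j = K
        · subst hj
          simp [he, Equiv.funSplitAt, Equiv.piSplitAt, Stmt8.mpq]
        · simp [he, Equiv.funSplitAt, Equiv.piSplitAt, Stmt8.mpq, hj, hbase]
      have hfin' : ∀ q : Equiv.Perm (Fin n),
          ∃ t, IsStable (Stmt8.Pm (Stmt8.mpq K base q)) (Stmt8.prop S K base q t) :=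
        fun q => hex (Stmt8.mpq K base q)
      have hGle : ∀ q, Stmt8.G S K base hfin' q
          ≤ Stmt8.tKd S (Stmt8.mpq K base q) K (τ (Stmt8.mpq K base q)) := by
        intro q
        unfold Stmt8.G Stmt8.cntP Stmt8.tKd
        apply Finset.card_le_card
        intro t ht
        rw [Finset.mem_filter, Finset.mem_range] at ht
        obtain ⟨htFS, hpre⟩ := ht
        have hFSle : Stmt8.FS S K base hfin' q ≤ τ (Stmt8.mpq K base q) := by
          apply Nat.find_min'
          have hst := Nat.find_spec (hex (Stmt8.mpq K base q))
          have hsd := Stmt8.stable_matches_sd _ _ hst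
          refine ⟨fun j hj => ?_, ?_⟩
          · have h1 := hsd j
            rw [Stmt8.sdF_mpq K base q hj] at h1
            exact h1
          · exact hsd K
        have hns : ¬ Stmt8.succAt S K base q t :=
          fun hs => Stmt8.FS_min S K base hfin' htFS ⟨hpre, hs⟩
        obtain ⟨hne, hmin⟩ := Stmt8.minbadF K base q (Stmt8.prop S K base q t) hpre hns
        rw [Finset.mem_filter, Finset.mem_range]
        constructor
        · omega
        · show Stmt8.respman S (Stmt8.mpq K base q) t = K
          have hne' : (Stmt8.badF (Stmt8.mpq K base q)
              (proposal S (Stmt8.advF (Stmt8.mpq K base q)) t)).Nonempty := hne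
          have hmin' : (Stmt8.badF (Stmt8.mpq K base q)
              (proposal S (Stmt8.advF (Stmt8.mpq K base q)) t)).min' hne' = K := hmin
          rw [Stmt8.respman, dif_pos hne']
          exact hmin' 
      calc Fintype.card (Equiv.Perm (Fin n)) * (n - K.val - 1)
          ≤ 2 * ∑ q : Equiv.Perm (Fin n), Stmt8.G S K base hfin' q :=
            Stmt8.sumG S K base hfin'
        _ ≤ 2 * ∑ q : Equiv.Perm (Fin n),
              Stmt8.tKd S (Stmt8.mpq K base q) K (τ (Stmt8.mpq K base q)) := by
            apply Nat.mul_le_mul_left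
            exact Finset.sum_le_sum (fun q _ => hGle q)
        _ = 2 * ∑ q : Equiv.Perm (Fin n),
              Stmt8.tKd S (e.symm (q, rr)) K (τ (e.symm (q, rr))) := by
            congr 1
            exact Finset.sum_congr rfl (fun q _ => by rw [hmpq q])
    calc NN * (n - K.val - 1)
        = ∑ _rr : { j : Fin n // j ≠ K } → Equiv.Perm (Fin n),
            (Fintype.card (Equiv.Perm (Fin n)) * (n - K.val - 1)) := by
          rw [Finset.sum_const, Finset.card_univ, smul_eq_mul, hcard]
          ring
      _ ≤ ∑ rr : { j : Fin n // j ≠ K } → Equiv.Perm (Fin n),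
            2 * ∑ q : Equiv.Perm (Fin n),
              Stmt8.tKd S (e.symm (q, rr)) K (τ (e.symm (q, rr))) :=
          Finset.sum_le_sum (fun rr _ => hper rr)
      _ = 2 * ∑ mp, Stmt8.tKd S mp K (τ mp) := by
          rw [hsum1, Finset.mul_sum]
  -- ### combine over all men
  have hmain : NN * (n * (n - 1)) ≤ 4 * ∑ mp : Fin n → Equiv.Perm (Fin n), τ mp := by
    have h1 : ∑ K : Fin n, (NN * (n - K.val - 1))
        ≤ ∑ K : Fin n, 2 * ∑ mp, Stmt8.tKd S mp K (τ mp) :=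
      Finset.sum_le_sum (fun K _ => hperK K)
    have h2 : ∑ K : Fin n, 2 * ∑ mp, Stmt8.tKd S mp K (τ mp)
        = 2 * ∑ mp, τ mp := by
      rw [← Finset.mul_sum]
      congr 1
      rw [Finset.sum_comm]
      exact Finset.sum_congr rfl (fun mp _ => (Stmt8.tKd_sum S mp (τ mp)).symm)
    have h3 : ∑ K : Fin n, (NN * (n - K.val - 1)) = NN * ∑ K : Fin n, (n - K.val - 1) := by
      rw [Finset.mul_sum]
    have h4 : (∑ K : Fin n, (n - K.val - 1)) * 2 = n * (n - 1) := by
      rw [Fin.sum_univ_eq_sum_range (fun v => n - v - 1)]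
      have e2 : ∑ j ∈ Finset.range n, (n - j - 1) = ∑ j ∈ Finset.range n, (n - 1 - j) :=
        Finset.sum_congr rfl (fun j _ => by omega)
      have e3 : ∑ j ∈ Finset.range n, (n - 1 - j) = ∑ j ∈ Finset.range n, j :=
        Finset.sum_range_reflect (fun j => j) n
      rw [e2, e3, Finset.sum_range_id_mul_two]
    calc NN * (n * (n - 1)) = NN * ((∑ K : Fin n, (n - K.val - 1)) * 2) := by rw [h4]
      _ = 2 * (NN * ∑ K : Fin n, (n - K.val - 1)) := by ring
      _ = 2 * ∑ K : Fin n, (NN * (n - K.val - 1)) := by rw [h3]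
      _ ≤ 2 * ∑ K : Fin n, 2 * ∑ mp, Stmt8.tKd S mp K (τ mp) :=
          Nat.mul_le_mul_left _ h1
      _ = 2 * (2 * ∑ mp, τ mp) := by rw [h2]
      _ = 4 * ∑ mp, τ mp := by ring
  -- ### real arithmetic
  have hNN0 : (0:ℝ) < (NN : ℝ) := by
    have : 0 < NN := Fintype.card_pos
    exact_mod_cast this
  have hτcast : (NN : ℝ) * ((n : ℝ) * ((n : ℝ) - 1))
      ≤ 4 * ∑ mp : Fin n → Equiv.Perm (Fin n), (τ mp : ℝ) := by
    have hc : ((NN * (n * (n - 1)) : ℕ) : ℝ) ≤ ((4 * ∑ mp, τ mp : ℕ) : ℝ) := by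
      exact_mod_cast hmain
    push_cast [Nat.cast_sub (by omega : 1 ≤ n)] at hc
    exact hc
  have hTτ : ∑ mp : Fin n → Equiv.Perm (Fin n), (τ mp : ℝ)
      ≤ ∑ mp : Fin n → Equiv.Perm (Fin n), (T mp : ℝ) := by
    apply Finset.sum_le_sum
    intro mp _
    exact_mod_cast hτle mp
  rw [div_le_div_iff₀ (by norm_num : (0:ℝ) < 9) hNN0]
  have hnR : (3 : ℝ) ≤ (n : ℝ) := by exact_mod_cast hn
  have h9 : 4 * (n:ℝ)^2 ≤ 9 * ((n:ℝ) * ((n:ℝ) - 1)) := by nlinarith [hnR]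
  nlinarith [hτcast, hTτ, mul_le_mul_of_nonneg_left h9 hNN0.le]
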